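/- arXiv:2210.00895 — 5 statements merged into one kernel-verified Lean document; each statement's English description precedes it below -/
import Mathlib

section
/- Let ν and ν' be probability measures on ℝ with finite first moments and means μ = E(ν) > μ' = E(ν'). Let (X_i)_{i≥1} and (Y_i)_{i≥1} be mutually independent i.i.d. sequences with X_i distributed according to ν and Y_i according to ν', and let X̄_N and Ȳ_N denote the averages of the first N terms of each sequence. Then limsup_{N→∞} (1/N) · ln P(X̄_N ≤ Ȳ_N) ≤ − inf_{x ∈ [μ', μ]} (φ*_{ν'}(x) + φ*_ν(x)). -/
open MeasureTheory Filter Set ProbabilityTheory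
open scoped ENNReal NNReal

noncomputable section

/-- Mean of a (probability) measure on ℝ. -/
def Emean (ν : Measure ℝ) : ℝ := ∫ x, x ∂ν

open Classical in
/-- Kullback–Leibler divergence `∫ ln (dζ/dν) dζ`, equal to `+∞` if `ζ` is not absolutely
continuous with respect to `ν` (or the integral is not defined). -/
def KL (ζ ν : Measure ℝ) : ℝ≥0∞ :=
  if ζ ≪ ν ∧ Integrable (fun x => Real.log ((ζ.rnDeriv ν x).toReal)) ζ
  then ENNReal.ofReal (∫ x, Real.log ((ζ.rnDeriv ν x).toReal) ∂ζ)
  else ⊤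

/-- Log-moment generating function `φ_ν`, with values in `EReal` (so that `+∞` is allowed). -/
def logMgf (ν : Measure ℝ) (l : ℝ) : EReal :=
  ENNReal.log (∫⁻ x, ENNReal.ofReal (Real.exp (l * x)) ∂ν)

/-- Fenchel–Legendre transform `φ*_ν(x) = sup_λ (λ x − φ_ν(λ))`. -/
def phiStar (ν : Measure ℝ) (x : ℝ) : EReal :=
  ⨆ l : ℝ, ((l * x : ℝ) : EReal) - logMgf ν l

/-- `Φ(ν', ν) = inf_{x ∈ [E(ν'), E(ν)]} (φ*_{ν'}(x) + φ*_ν(x))`. -/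
def Phi (ν' ν : Measure ℝ) : EReal :=
  ⨅ x ∈ Set.Icc (Emean ν') (Emean ν), (phiStar ν' x + phiStar ν x)

/-- The model `P[0,1]` of all Borel probability measures on `[0,1]` (seen as measures on ℝ). -/
def Pcc : Set (Measure ℝ) :=
  {ζ | IsProbabilityMeasure ζ ∧ ζ (Set.Icc (0:ℝ) 1)ᶜ = 0}

/-- `Linf<(x, ν) = inf {KL(ζ, ν) : ζ ∈ D, E(ζ) < x}`, with `inf ∅ = +∞`. -/
def Linflt (D : Set (Measure ℝ)) (x : ℝ) (ν : Measure ℝ) : ℝ≥0∞ :=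
  ⨅ ζ ∈ {ζ ∈ D | Emean ζ < x}, KL ζ ν

/-- `Linf≤(x, ν) = inf {KL(ζ, ν) : ζ ∈ D, E(ζ) ≤ x}`, with `inf ∅ = +∞`. -/
def Linfle (D : Set (Measure ℝ)) (x : ℝ) (ν : Measure ℝ) : ℝ≥0∞ :=
  ⨅ ζ ∈ {ζ ∈ D | Emean ζ ≤ x}, KL ζ ν

/-- `Linf>(x, ν) = inf {KL(ζ, ν) : ζ ∈ D, E(ζ) > x}`, with `inf ∅ = +∞`. -/
def Linfgt (D : Set (Measure ℝ)) (x : ℝ) (ν : Measure ℝ) : ℝ≥0∞ :=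
  ⨅ ζ ∈ {ζ ∈ D | x < Emean ζ}, KL ζ ν

/-- `Linf≥(x, ν) = inf {KL(ζ, ν) : ζ ∈ D, E(ζ) ≥ x}`, with `inf ∅ = +∞`. -/
def Linfge (D : Set (Measure ℝ)) (x : ℝ) (ν : Measure ℝ) : ℝ≥0∞ :=
  ⨅ ζ ∈ {ζ ∈ D | x ≤ Emean ζ}, KL ζ ν

/-- Closed support of a measure on ℝ. -/
def msupport (ν : Measure ℝ) : Set ℝ := {x | ∀ U ∈ nhds x, ν U ≠ 0}

/-- Lower end `m(ν)` of the closed support of `ν`. -/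
def mMin (ν : Measure ℝ) : ℝ := sInf (msupport ν)

/-- Upper end `M(ν)` of the closed support of `ν`. -/
def mMax (ν : Measure ℝ) : ℝ := sSup (msupport ν)

section Helpers

open Real

lemma measurable_ofReal_exp (a : ℝ) :
    Measurable (fun x : ℝ => ENNReal.ofReal (Real.exp (a * x))) :=
  ((measurable_const.mul measurable_id).exp).ennreal_ofReal

lemma lint_pos (ν : Measure ℝ) [IsProbabilityMeasure ν] (a : ℝ) :
    0 < ∫⁻ x, ENNReal.ofReal (Real.exp (a * x)) ∂ν := by
  rw [pos_iff_ne_zero]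
  intro h
  rw [lintegral_eq_zero_iff (measurable_ofReal_exp a)] at h
  have h3 : ∀ᵐ x ∂ν, False := by
    filter_upwards [h] with x hx
    simp only [Pi.zero_apply, ENNReal.ofReal_eq_zero] at hx
    exact hx.not_gt (Real.exp_pos _)
  rw [eventually_false_iff_eq_bot, ae_eq_bot] at h3
  exact (IsProbabilityMeasure.ne_zero ν) h3

lemma logMgf_ne_bot (ν : Measure ℝ) [IsProbabilityMeasure ν] (a : ℝ) :
    logMgf ν a ≠ ⊥ := by
  simp only [logMgf, ne_eq, ENNReal.log_eq_bot_iff]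
  exact (lint_pos ν a).ne'

lemma logMgf_zero (ν : Measure ℝ) [IsProbabilityMeasure ν] : logMgf ν 0 = 0 := by
  simp [logMgf, lintegral_const, measure_univ]

lemma integrable_exp_of_ne_top {ν : Measure ℝ} {a : ℝ}
    (h : logMgf ν a ≠ ⊤) : Integrable (fun x => Real.exp (a * x)) ν := by
  simp only [logMgf, ne_eq, ENNReal.log_eq_top_iff] at h
  refine ⟨((measurable_const.mul measurable_id).exp).aestronglyMeasurable, ?_⟩
  rw [hasFiniteIntegral_iff_ofReal (Eventually.of_forall fun x => (Real.exp_pos _).le)]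
  exact lt_top_iff_ne_top.2 h

lemma logMgf_eq_log (ν : Measure ℝ) [IsProbabilityMeasure ν] {a : ℝ}
    (h : Integrable (fun x => Real.exp (a * x)) ν) :
    logMgf ν a = ((Real.log (∫ x, Real.exp (a * x) ∂ν) : ℝ) : EReal) := by
  rw [logMgf, ← ofReal_integral_eq_lintegral_ofReal h
    (Eventually.of_forall fun x => (Real.exp_pos _).le)]
  have : 0 < ∫ x, Real.exp (a * x) ∂ν := integral_exp_pos h
  rw [ENNReal.log_ofReal_of_pos this]

lemma jensen_logMgf (ν : Measure ℝ) [IsProbabilityMeasure ν]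
    (hint : Integrable (fun x : ℝ => x) ν) (a : ℝ) :
    ((a * ∫ x, x ∂ν : ℝ) : EReal) ≤ logMgf ν a := by
  by_cases htop : logMgf ν a = ⊤
  · rw [htop]; exact le_top
  have h := integrable_exp_of_ne_top htop
  set m := ∫ x, x ∂ν with hm
  have hT : Integrable (fun x : ℝ => (Real.exp (a*m)*a) * x + Real.exp (a*m)*(1 - a*m)) ν :=
    (hint.const_mul _).add (integrable_const _)
  have hpt : ∀ x : ℝ, (Real.exp (a*m)*a) * x + Real.exp (a*m)*(1 - a*m) ≤ Real.exp (a*x) := by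
    intro x
    have h1 : (a*x - a*m) + 1 ≤ Real.exp (a*x - a*m) := add_one_le_exp _
    have h2 : Real.exp (a*m) * ((a*x - a*m) + 1) ≤ Real.exp (a*m) * Real.exp (a*x - a*m) :=
      mul_le_mul_of_nonneg_left h1 (exp_pos _).le
    rw [← Real.exp_add] at h2
    calc (Real.exp (a*m)*a) * x + Real.exp (a*m)*(1 - a*m)
        = Real.exp (a*m) * ((a*x - a*m) + 1) := by ring
      _ ≤ Real.exp (a*m + (a*x - a*m)) := h2
      _ = Real.exp (a*x) := by ring_nf
  have hmono : ∫ x, ((Real.exp (a*m)*a) * x + Real.exp (a*m)*(1 - a*m)) ∂ν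
      ≤ ∫ x, Real.exp (a*x) ∂ν := integral_mono hT h hpt
  have hTval : ∫ x, ((Real.exp (a*m)*a) * x + Real.exp (a*m)*(1 - a*m)) ∂ν = Real.exp (a*m) := by
    rw [integral_add (hint.const_mul _) (integrable_const _), integral_const_mul,
      integral_const, probReal_univ]
    simp [← hm]; ring
  rw [hTval] at hmono
  rw [logMgf_eq_log ν h]
  have : a * m ≤ Real.log (∫ x, Real.exp (a*x) ∂ν) := by
    have := Real.log_le_log (exp_pos _) hmono
    rwa [Real.log_exp] at this
  exact_mod_cast this

lemma lint_holder (ν : Measure ℝ) {t : ℝ} (ht : 0 < t) (ht' : t < 1) (a b : ℝ) :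
    ∫⁻ x, ENNReal.ofReal (Real.exp ((t*a+(1-t)*b) * x)) ∂ν ≤
      (∫⁻ x, ENNReal.ofReal (Real.exp (a*x)) ∂ν) ^ t *
      (∫⁻ x, ENNReal.ofReal (Real.exp (b*x)) ∂ν) ^ (1-t) := by
  have h1t : 0 < 1 - t := by linarith
  have hpq : (1/t).HolderConjugate (1/(1-t)) :=
    Real.holderConjugate_one_div ht h1t (by ring)
  have key := ENNReal.lintegral_mul_le_Lp_mul_Lq ν hpq
    (f := fun x => ENNReal.ofReal (Real.exp ((t*a)*x)))
    (g := fun x => ENNReal.ofReal (Real.exp (((1-t)*b)*x)))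
    (measurable_ofReal_exp (t*a)).aemeasurable (measurable_ofReal_exp ((1-t)*b)).aemeasurable
  have e1 : ∀ x : ℝ, ((fun x => ENNReal.ofReal (Real.exp ((t*a)*x))) *
      fun x => ENNReal.ofReal (Real.exp (((1-t)*b)*x))) x
      = ENNReal.ofReal (Real.exp ((t*a+(1-t)*b) * x)) := by
    intro x
    simp only [Pi.mul_apply, ← ENNReal.ofReal_mul (Real.exp_pos _).le, ← Real.exp_add]
    ring_nf
  have e2 : ∀ x : ℝ, ENNReal.ofReal (Real.exp ((t*a)*x)) ^ (1/t)
      = ENNReal.ofReal (Real.exp (a*x)) := by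
    intro x
    rw [ENNReal.ofReal_rpow_of_pos (Real.exp_pos _), ← Real.exp_mul]
    congr 1
    field_simp
  have e3 : ∀ x : ℝ, ENNReal.ofReal (Real.exp (((1-t)*b)*x)) ^ (1/(1-t))
      = ENNReal.ofReal (Real.exp (b*x)) := by
    intro x
    rw [ENNReal.ofReal_rpow_of_pos (Real.exp_pos _), ← Real.exp_mul]
    congr 1
    field_simp
  calc ∫⁻ x, ENNReal.ofReal (Real.exp ((t*a+(1-t)*b) * x)) ∂ν
      = ∫⁻ x, ((fun x => ENNReal.ofReal (Real.exp ((t*a)*x))) *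
        fun x => ENNReal.ofReal (Real.exp (((1-t)*b)*x))) x ∂ν := by
        exact lintegral_congr fun x => (e1 x).symm
    _ ≤ (∫⁻ x, ENNReal.ofReal (Real.exp ((t*a)*x)) ^ (1/t) ∂ν) ^ (1/(1/t)) *
        (∫⁻ x, ENNReal.ofReal (Real.exp (((1-t)*b)*x)) ^ (1/(1-t)) ∂ν) ^ (1/(1/(1-t))) := key
    _ = (∫⁻ x, ENNReal.ofReal (Real.exp (a*x)) ∂ν) ^ t *
        (∫⁻ x, ENNReal.ofReal (Real.exp (b*x)) ∂ν) ^ (1-t) := by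
        rw [one_div_one_div, one_div_one_div]
        congr 1
        · congr 1; exact lintegral_congr fun x => e2 x
        · congr 1; exact lintegral_congr fun x => e3 x

lemma logMgf_cvx (ν : Measure ℝ) [IsProbabilityMeasure ν] {a b t : ℝ} (ht : 0 < t) (ht' : t < 1)
    (ha : logMgf ν a ≠ ⊤) (hb : logMgf ν b ≠ ⊤) :
    logMgf ν (t*a+(1-t)*b) ≠ ⊤ ∧
    (logMgf ν (t*a+(1-t)*b)).toReal ≤ t*(logMgf ν a).toReal + (1-t)*(logMgf ν b).toReal := by
  simp only [logMgf, ne_eq, ENNReal.log_eq_top_iff] at ha hb ⊢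
  set A := ∫⁻ x, ENNReal.ofReal (Real.exp (a*x)) ∂ν with hA
  set B := ∫⁻ x, ENNReal.ofReal (Real.exp (b*x)) ∂ν with hB
  set C := ∫⁻ x, ENNReal.ofReal (Real.exp ((t*a+(1-t)*b)*x)) ∂ν with hC
  have key : C ≤ A ^ t * B ^ (1-t) := lint_holder ν ht ht' a b
  have hfin : A ^ t * B ^ (1-t) < ⊤ := by
    apply ENNReal.mul_lt_top <;> exact ENNReal.rpow_lt_top_of_nonneg (by linarith) (by assumption)
  have hCtop : C ≠ ⊤ := (key.trans_lt hfin).ne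
  refine ⟨hCtop, ?_⟩
  have hlog : ENNReal.log C ≤ (t : EReal) * ENNReal.log A + ((1-t : ℝ) : EReal) * ENNReal.log B := by
    calc ENNReal.log C ≤ ENNReal.log (A ^ t * B ^ (1-t)) := ENNReal.log_monotone key
      _ = ENNReal.log (A ^ t) + ENNReal.log (B ^ (1-t)) := ENNReal.log_mul_add
      _ = (t : EReal) * ENNReal.log A + ((1-t : ℝ) : EReal) * ENNReal.log B := by
          rw [ENNReal.log_rpow, ENNReal.log_rpow]
  have hAb : ENNReal.log A ≠ ⊥ := by simp [ENNReal.log_eq_bot_iff, hA, (lint_pos ν a).ne']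
  have hBb : ENNReal.log B ≠ ⊥ := by simp [ENNReal.log_eq_bot_iff, hB, (lint_pos ν b).ne']
  have hCb : ENNReal.log C ≠ ⊥ := by simp [ENNReal.log_eq_bot_iff, hC, (lint_pos ν _).ne']
  have hAt : ENNReal.log A ≠ ⊤ := by simpa [ENNReal.log_eq_top_iff] using ha
  have hBt : ENNReal.log B ≠ ⊤ := by simpa [ENNReal.log_eq_top_iff] using hb
  have hCt : ENNReal.log C ≠ ⊤ := by simpa [ENNReal.log_eq_top_iff] using hCtop
  rw [← EReal.coe_toReal hAt hAb, ← EReal.coe_toReal hBt hBb, ← EReal.coe_toReal hCt hCb] at hlog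
  rw [← EReal.coe_mul, ← EReal.coe_mul, ← EReal.coe_add] at hlog
  exact_mod_cast hlog

lemma phiStar_nonneg (ν : Measure ℝ) [IsProbabilityMeasure ν] (x : ℝ) :
    0 ≤ phiStar ν x := by
  have : ((0 * x : ℝ) : EReal) - logMgf ν 0 = 0 := by
    rw [logMgf_zero]; simp
  calc (0:EReal) = ((0 * x : ℝ) : EReal) - logMgf ν 0 := this.symm
    _ ≤ phiStar ν x := le_iSup (fun l => ((l * x : ℝ) : EReal) - logMgf ν l) 0

lemma coe_sub_le_zero {r : ℝ} {v : EReal} (h : (r : EReal) ≤ v) : (r : EReal) - v ≤ 0 := by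
  induction v using EReal.rec with
  | bot => exact absurd h (by simp)
  | coe y =>
      rw [← EReal.coe_sub]
      exact_mod_cast sub_nonpos.2 (by exact_mod_cast h)
  | top => rw [EReal.sub_top]; exact bot_le

lemma coe_sub_ne_top {r : ℝ} {v : EReal} (hv : v ≠ ⊥) : (r : EReal) - v ≠ ⊤ := by
  induction v using EReal.rec with
  | bot => exact absurd rfl hv
  | coe y => rw [← EReal.coe_sub]; exact EReal.coe_ne_top _
  | top => rw [EReal.sub_top]; exact bot_ne_top

lemma phiStar_mean_nonpos (ν : Measure ℝ) [IsProbabilityMeasure ν]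
    (hint : Integrable (fun x : ℝ => x) ν) :
    phiStar ν (∫ x, x ∂ν) ≤ 0 :=
  iSup_le fun l => coe_sub_le_zero (jensen_logMgf ν hint l)

/-- monotone to the right of the mean -/
lemma phiStar_mono (ν : Measure ℝ) [IsProbabilityMeasure ν]
    (hint : Integrable (fun x : ℝ => x) ν) {x y : ℝ}
    (hm : (∫ x, x ∂ν) ≤ x) (hxy : x ≤ y) : phiStar ν x ≤ phiStar ν y := by
  rcases hxy.eq_or_lt with rfl | hlt
  · exact le_rfl
  set m := ∫ x, x ∂ν with hmdef
  refine iSup_le fun l => ?_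
  by_cases htop : logMgf ν l = ⊤
  · rw [htop, EReal.sub_top]; exact bot_le
  have hbot := logMgf_ne_bot ν l
  set F := (logMgf ν l).toReal with hF
  have hFeq : logMgf ν l = (F : EReal) := (EReal.coe_toReal htop hbot).symm
  have hJ : l * m ≤ F := by
    have := jensen_logMgf ν hint l
    rw [hFeq] at this
    exact_mod_cast this
  rw [hFeq, ← EReal.coe_sub]
  have hmy : m < y := lt_of_le_of_lt hm hlt
  set t := (y - x) / (y - m) with htdef
  have ht0 : 0 < y - m := by linarith
  have ht : 0 < t := div_pos (by linarith) ht0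
  have ht1 : t ≤ 1 := by
    rw [div_le_one ht0]; linarith
  have hxcomb : l * x - F = t * (l * m - F) + (1 - t) * (l * y - F) := by
    have : t * m + (1 - t) * y = x := by
      rw [htdef]
      field_simp
      ring
    rw [← this]; ring
  rcases le_total (l * y - F) 0 with hyF | hyF
  · have : l * x - F ≤ 0 := by nlinarith
    calc ((l * x - F : ℝ) : EReal) ≤ (0 : EReal) := by exact_mod_cast this
      _ ≤ phiStar ν y := phiStar_nonneg ν y
  · have hle : l * x - F ≤ l * y - F := by nlinarith
    calc ((l * x - F : ℝ) : EReal) ≤ ((l * y - F : ℝ) : EReal) := by exact_mod_cast hle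
      _ = ((l * y : ℝ) : EReal) - logMgf ν l := by rw [hFeq, ← EReal.coe_sub]
      _ ≤ phiStar ν y := le_iSup (fun l => ((l * y : ℝ) : EReal) - logMgf ν l) l

/-- antitone to the left of the mean -/
lemma phiStar_anti (ν : Measure ℝ) [IsProbabilityMeasure ν]
    (hint : Integrable (fun x : ℝ => x) ν) {x y : ℝ}
    (hxy : x ≤ y) (hm : y ≤ (∫ x, x ∂ν)) : phiStar ν y ≤ phiStar ν x := by
  rcases hxy.eq_or_lt with rfl | hlt
  · exact le_rfl
  set m := ∫ x, x ∂ν with hmdef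
  refine iSup_le fun l => ?_
  by_cases htop : logMgf ν l = ⊤
  · rw [htop, EReal.sub_top]; exact bot_le
  have hbot := logMgf_ne_bot ν l
  set F := (logMgf ν l).toReal with hF
  have hFeq : logMgf ν l = (F : EReal) := (EReal.coe_toReal htop hbot).symm
  have hJ : l * m ≤ F := by
    have := jensen_logMgf ν hint l
    rw [hFeq] at this
    exact_mod_cast this
  rw [hFeq, ← EReal.coe_sub]
  have hmx : x < m := lt_of_lt_of_le hlt hm
  set t := (y - x) / (m - x) with htdef
  have ht0 : 0 < m - x := by linarith
  have ht : 0 < t := div_pos (by linarith) ht0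
  have ht1 : t ≤ 1 := by
    rw [div_le_one ht0]; linarith
  have hxcomb : l * y - F = t * (l * m - F) + (1 - t) * (l * x - F) := by
    have : t * m + (1 - t) * x = y := by
      rw [htdef]
      field_simp
      ring
    rw [← this]; ring
  rcases le_total (l * x - F) 0 with hyF | hyF
  · have : l * y - F ≤ 0 := by nlinarith
    calc ((l * y - F : ℝ) : EReal) ≤ (0 : EReal) := by exact_mod_cast this
      _ ≤ phiStar ν x := phiStar_nonneg ν x
  · have hle : l * y - F ≤ l * x - F := by nlinarith
    calc ((l * y - F : ℝ) : EReal) ≤ ((l * x - F : ℝ) : EReal) := by exact_mod_cast hle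
      _ = ((l * x : ℝ) : EReal) - logMgf ν l := by rw [hFeq, ← EReal.coe_sub]
      _ ≤ phiStar ν x := le_iSup (fun l => ((l * x : ℝ) : EReal) - logMgf ν l) l

lemma sup_add_sup_le {A B : ℝ → EReal} {s : ℝ}
    (hA0 : A 0 = 0) (hB0 : B 0 = 0) (hAt : ∀ a, A a ≠ ⊤) (hBt : ∀ b, B b ≠ ⊤)
    (h : ∀ a b, A a + B b ≤ (s : EReal)) :
    (⨆ a, A a) + (⨆ b, B b) ≤ (s : EReal) := by
  have hSA_le : (⨆ a, A a) ≤ (s : EReal) := iSup_le fun a => by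
    have := h a 0; rwa [hB0, add_zero] at this
  have hSB_le : (⨆ b, B b) ≤ (s : EReal) := iSup_le fun b => by
    have := h 0 b; rwa [hA0, zero_add] at this
  have hSA_bot : (⨆ a, A a) ≠ ⊥ := by
    intro hb
    have : A 0 ≤ ⊥ := hb ▸ le_iSup A 0
    rw [hA0] at this
    simp at this
  have hSB_bot : (⨆ b, B b) ≠ ⊥ := by
    intro hb
    have : B 0 ≤ ⊥ := hb ▸ le_iSup B 0
    rw [hB0] at this
    simp at this
  have hSA_top : (⨆ a, A a) ≠ ⊤ := fun hb => by
    rw [hb] at hSA_le; exact absurd (top_le_iff.1 hSA_le) (by simp)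
  have hSB_top : (⨆ b, B b) ≠ ⊤ := fun hb => by
    rw [hb] at hSB_le; exact absurd (top_le_iff.1 hSB_le) (by simp)
  set α := (⨆ a, A a).toReal with hα
  set β := (⨆ b, B b).toReal with hβ
  have hαeq : (⨆ a, A a) = (α : EReal) := (EReal.coe_toReal hSA_top hSA_bot).symm
  have hβeq : (⨆ b, B b) = (β : EReal) := (EReal.coe_toReal hSB_top hSB_bot).symm
  have key : α ≤ s - β := by
    have hkey : (⨆ a, A a) ≤ ((s - β : ℝ) : EReal) := by
      refine iSup_le fun a => ?_
      by_cases hAbot : A a = ⊥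
      · rw [hAbot]; exact bot_le
      have hAa : A a = (((A a).toReal : ℝ) : EReal) := (EReal.coe_toReal (hAt a) hAbot).symm
      set αa := (A a).toReal with hαa
      have hb : (⨆ b, B b) ≤ ((s - αa : ℝ) : EReal) := by
        refine iSup_le fun b => ?_
        by_cases hBbot : B b = ⊥
        · rw [hBbot]; exact bot_le
        have hBb : B b = (((B b).toReal : ℝ) : EReal) := (EReal.coe_toReal (hBt b) hBbot).symm
        set βb := (B b).toReal with hβb
        have hab := h a b
        rw [hAa, hBb, ← EReal.coe_add] at hab
        have hab' : αa + βb ≤ s := by exact_mod_cast hab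
        rw [hBb]
        exact_mod_cast (by linarith : βb ≤ s - αa)
      rw [hβeq] at hb
      have hb' : β ≤ s - αa := by exact_mod_cast hb
      rw [hAa]
      exact_mod_cast (by linarith : αa ≤ s - β)
    rw [hαeq] at hkey
    exact_mod_cast hkey
  rw [hαeq, hβeq, ← EReal.coe_add]
  exact_mod_cast (by linarith : α + β ≤ s)

lemma div_aux {x y : EReal} {N : ℕ} (hN : 1 ≤ N) (h : x ≤ ((N : ℝ) : EReal) * y) :
    (((N : ℝ)⁻¹ : ℝ) : EReal) * x ≤ y := by
  have hNpos : (0:ℝ) < (N:ℝ) := by exact_mod_cast hN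
  have hNinv : (0:ℝ) < (N:ℝ)⁻¹ := by positivity
  induction y using EReal.rec with
  | top => exact le_top
  | bot =>
    rw [EReal.coe_mul_bot_of_pos hNpos] at h
    have hx : x = ⊥ := le_bot_iff.1 h
    rw [hx, EReal.coe_mul_bot_of_pos hNinv]
  | coe r =>
    induction x using EReal.rec with
    | bot => rw [EReal.coe_mul_bot_of_pos hNinv]; exact bot_le
    | top =>
      rw [← EReal.coe_mul, top_le_iff] at h
      exact absurd h (EReal.coe_ne_top _)
    | coe xr =>
      rw [← EReal.coe_mul] at h ⊢
      have hle : xr ≤ (N:ℝ) * r := by exact_mod_cast h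
      have : (N:ℝ)⁻¹ * xr ≤ r := by
        rw [inv_mul_le_iff₀ hNpos]
        exact hle
      exact_mod_cast this

lemma feasible_aux {D1 D2 : Set ℝ} {F G : ℝ → ℝ} {mu' mu s : ℝ}
    (hmu : mu' ≤ mu) (hs : 0 ≤ s) (h01 : (0:ℝ) ∈ D1) (h02 : (0:ℝ) ∈ D2)
    (hJ1 : ∀ a ∈ D1, a * mu' ≤ F a) (hJ2 : ∀ b ∈ D2, -(b * mu) ≤ G b)
    (hdiag : ∀ c ∈ D1, c ∈ D2 → -s ≤ F c + G c)
    (hcvx : ∀ a a' b b' t : ℝ, a ∈ D1 → a' ∈ D1 → b ∈ D2 → b' ∈ D2 → 0 < t → t < 1 →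
       t*a+(1-t)*a' = t*b+(1-t)*b' →
       -s ≤ (t*F a+(1-t)*F a') + (t*G b+(1-t)*G b')) :
    ∃ x : ℝ, ∀ a ∈ D1, ∀ b ∈ D2, (a - b) * x ≤ s + F a + G b := by
  classical
  set Uset : Set ℝ := {u | ∃ a b, a ∈ D1 ∧ b ∈ D2 ∧ b < a ∧ u = (s + F a + G b) / (a - b)}
    with hUdef
  set Lset : Set ℝ := {l | ∃ a b, a ∈ D1 ∧ b ∈ D2 ∧ a < b ∧ l = (s + F a + G b) / (a - b)}
    with hLdef
  have key : ∀ l ∈ Lset, ∀ u ∈ Uset, l ≤ u := by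
    rintro l ⟨a, b, ha, hb, hab, rfl⟩ u ⟨a', b', ha', hb', hab', rfl⟩
    set Sig : ℝ := (a' - b') + (b - a) with hSig
    have hSigpos : 0 < Sig := by simp only [hSig]; linarith
    set t : ℝ := (a' - b') / Sig with ht
    have ht0 : 0 < t := div_pos (by linarith) hSigpos
    have ht1 : t < 1 := by
      rw [ht, div_lt_one hSigpos]; linarith
    have hcomb : t*a+(1-t)*a' = t*b+(1-t)*b' := by
      have h1' : t * Sig = a' - b' := by
        rw [ht]; exact div_mul_cancel₀ _ hSigpos.ne'
      linear_combination -h1' + t * hSig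
    have hkey := hcvx a a' b b' t ha ha' hb hb' ht0 ht1 hcomb
    set P : ℝ := s + F a + G b with hP
    set Q : ℝ := s + F a' + G b' with hQ
    have hPQ : 0 ≤ t * P + (1-t) * Q := by
      simp only [hP, hQ]
      nlinarith [hkey]
    have hmain : 0 ≤ P * (a' - b') + Q * (b - a) := by
      have h1 : t * Sig = a' - b' := by
        rw [ht]; exact div_mul_cancel₀ _ hSigpos.ne'
      have h2 : (1 - t) * Sig = b - a := by
        rw [sub_mul, one_mul, h1, hSig]
        ring
      have hprod := mul_nonneg hPQ hSigpos.le
      calc (0:ℝ) ≤ (t * P + (1-t) * Q) * Sig := hprod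
        _ = P * (t * Sig) + Q * ((1-t) * Sig) := by ring
        _ = P * (a' - b') + Q * (b - a) := by rw [h1, h2]
    have hrw : P / (a - b) = (-P) / (b - a) := by
      rw [div_eq_div_iff (by linarith : a - b ≠ 0) (by linarith : b - a ≠ 0)]
      ring
    rw [hrw, div_le_div_iff₀ (by linarith : (0:ℝ) < b - a) (by linarith : (0:ℝ) < a' - b')]
    nlinarith [hmain]
  have master : ∀ x : ℝ, (∀ l ∈ Lset, l ≤ x) → (∀ u ∈ Uset, x ≤ u) →
      ∀ a ∈ D1, ∀ b ∈ D2, (a - b) * x ≤ s + F a + G b := by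
    intro x hxl hxu a ha b hb
    rcases lt_trichotomy a b with hab | rfl | hab
    · have hl : (s + F a + G b) / (a - b) ∈ Lset := ⟨a, b, ha, hb, hab, rfl⟩
      have hx := hxl _ hl
      have hm2 : (a - b) * x ≤ (a - b) * ((s + F a + G b) / (a - b)) :=
        mul_le_mul_of_nonpos_left hx (by linarith)
      rwa [mul_div_cancel₀ _ (by linarith : a - b ≠ 0)] at hm2
    · have := hdiag a ha hb
      have h0 : (a - a) * x = 0 := by ring
      rw [h0]; linarith
    · have hu : (s + F a + G b) / (a - b) ∈ Uset := ⟨a, b, ha, hb, hab, rfl⟩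
      have hx := hxu _ hu
      have hm2 : (a - b) * x ≤ (a - b) * ((s + F a + G b) / (a - b)) :=
        mul_le_mul_of_nonneg_left hx (by linarith)
      rwa [mul_div_cancel₀ _ (by linarith : a - b ≠ 0)] at hm2
  by_cases hL : Lset.Nonempty
  · have bddL : BddAbove Lset := by
      by_cases hU : Uset.Nonempty
      · obtain ⟨u, hu⟩ := hU
        exact ⟨u, fun l hl => key l hl u hu⟩
      · have hD1 : ∀ a ∈ D1, a ≤ 0 := by
          intro a ha
          by_contra hpos
          push_neg at hpos
          exact hU ⟨(s + F a + G 0) / (a - 0), a, 0, ha, h02, by linarith, rfl⟩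
        refine ⟨mu, ?_⟩
        rintro l ⟨a, b, ha, hb, hab, rfl⟩
        have hFa := hJ1 a ha
        have hGb := hJ2 b hb
        have ha0 := hD1 a ha
        rw [div_le_iff_of_neg (by linarith : a - b < 0)]
        nlinarith [mul_nonneg (neg_nonneg.2 ha0) (sub_nonneg.2 hmu)]
    refine ⟨sSup Lset, master _ (fun l hl => le_csSup bddL hl)
      (fun u hu => csSup_le hL (fun l hl => key l hl u hu))⟩
  · by_cases hU : Uset.Nonempty
    · have hD2 : ∀ b ∈ D2, b ≤ 0 := by
        intro b hb
        by_contra hneg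
        push_neg at hneg
        exact hL ⟨(s + F 0 + G b) / (0 - b), 0, b, h01, hb, by linarith, rfl⟩
      have bddU : BddBelow Uset := by
        refine ⟨mu', ?_⟩
        rintro u ⟨a, b, ha, hb, hab, rfl⟩
        have hFa := hJ1 a ha
        have hGb := hJ2 b hb
        have hb0 := hD2 b hb
        rw [le_div_iff₀ (by linarith : (0:ℝ) < a - b)]
        nlinarith [mul_nonneg (neg_nonneg.2 hb0) (sub_nonneg.2 hmu)]
      refine ⟨sInf Uset, master _ (fun l hl => absurd ⟨l, hl⟩ hL)
        (fun u hu => csInf_le bddU hu)⟩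
    · exact ⟨0, master 0 (fun l hl => absurd ⟨l, hl⟩ hL) (fun u hu => absurd ⟨u, hu⟩ hU)⟩

lemma chernoff {Ω : Type*} [MeasurableSpace Ω]
    (P : Measure Ω) [IsProbabilityMeasure P]
    (ν ν' : Measure ℝ) [IsProbabilityMeasure ν] [IsProbabilityMeasure ν']
    (X Y : ℕ → Ω → ℝ)
    (hXm : ∀ i, Measurable (X i)) (hYm : ∀ i, Measurable (Y i))
    (hindep : iIndepFun (Sum.elim X Y) P)
    (hX : ∀ i, P.map (X i) = ν) (hY : ∀ i, P.map (Y i) = ν')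
    {l : ℝ} (hl : 0 ≤ l) {N : ℕ} (hN : 1 ≤ N) :
    ENNReal.log (P {ω | (∑ i ∈ Finset.range N, X i ω) / (N : ℝ)
        ≤ (∑ i ∈ Finset.range N, Y i ω) / (N : ℝ)})
      ≤ ((N : ℝ) : EReal) * (logMgf ν' l + logMgf ν (-l)) := by
  have hNpos : (0:ℝ) < (N:ℝ) := by exact_mod_cast hN
  by_cases hν' : logMgf ν' l = ⊤
  · rw [hν', EReal.top_add_of_ne_bot (logMgf_ne_bot ν (-l)), EReal.coe_mul_top_of_pos hNpos]
    exact le_top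
  by_cases hν : logMgf ν (-l) = ⊤
  · rw [hν, add_comm, EReal.top_add_of_ne_bot (logMgf_ne_bot ν' l), EReal.coe_mul_top_of_pos hNpos]
    exact le_top
  have hint' : Integrable (fun x => Real.exp (l * x)) ν' := integrable_exp_of_ne_top hν'
  have hintν : Integrable (fun x => Real.exp (-l * x)) ν := integrable_exp_of_ne_top hν
  set Z : ℕ ⊕ ℕ → Ω → ℝ := Sum.elim (fun i ω => -X i ω) Y with hZdef
  have hZmeas : ∀ j, Measurable (Z j) := by
    intro j
    cases j with
    | inl i => exact (hXm i).neg
    | inr i => exact hYm i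
  have hZindep : iIndepFun Z P := by
    have h := hindep.comp (Sum.elim (fun _ : ℕ => fun x : ℝ => -x) (fun _ : ℕ => (id : ℝ → ℝ)))
      (by intro j; cases j with
          | inl i => exact measurable_neg
          | inr i => exact measurable_id)
    convert h using 1
    funext j
    cases j <;> rfl
  set s : Finset (ℕ ⊕ ℕ) := (Finset.range N).disjSum (Finset.range N) with hs
  have hint_inl : ∀ i, Integrable (fun ω => Real.exp (l * (-(X i ω)))) P := by
    intro i
    have h0 : Integrable (fun x => Real.exp (-l * x)) (P.map (X i)) := by rw [hX i]; exact hintν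
    have h1 : Integrable (fun ω => Real.exp (-l * X i ω)) P :=
      (integrable_map_measure (((measurable_const.mul measurable_id).exp).aestronglyMeasurable)
        (hXm i).aemeasurable).1 h0
    convert h1 using 2 with ω
    ring_nf
  have hint_inr : ∀ i, Integrable (fun ω => Real.exp (l * Y i ω)) P := by
    intro i
    have h0 : Integrable (fun x => Real.exp (l * x)) (P.map (Y i)) := by rw [hY i]; exact hint'
    exact (integrable_map_measure (((measurable_const.mul measurable_id).exp).aestronglyMeasurable)
      (hYm i).aemeasurable).1 h0
  have hint_all : ∀ j ∈ s, Integrable (fun ω => Real.exp (l * Z j ω)) P := by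
    intro j _
    cases j with
    | inl i => exact hint_inl i
    | inr i => exact hint_inr i
  have hintW : Integrable (fun ω => Real.exp (l * (∑ j ∈ s, Z j) ω)) P :=
    hZindep.integrable_exp_mul_sum hZmeas hint_all
  have markov := measure_ge_le_exp_mul_mgf (μ := P) (X := ∑ j ∈ s, Z j) 0 hl hintW
  simp only [mul_zero, neg_zero, Real.exp_zero, one_mul] at markov
  have hset : {ω | (∑ i ∈ Finset.range N, X i ω) / (N : ℝ)
      ≤ (∑ i ∈ Finset.range N, Y i ω) / (N : ℝ)} = {ω | 0 ≤ (∑ j ∈ s, Z j) ω} := by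
    ext ω
    simp only [Set.mem_setOf_eq]
    rw [div_le_div_iff_of_pos_right hNpos]
    rw [Finset.sum_apply]
    rw [hs, Finset.sum_disjSum]
    have hinl : ∀ i ∈ Finset.range N, Z (Sum.inl i) ω = -X i ω := fun i _ => rfl
    have hinr : ∀ i ∈ Finset.range N, Z (Sum.inr i) ω = Y i ω := fun i _ => rfl
    rw [Finset.sum_congr rfl hinl, Finset.sum_congr rfl hinr, Finset.sum_neg_distrib]
    constructor <;> intro h <;> linarith
  set M : ℝ := ∫ x, Real.exp (-l * x) ∂ν with hM
  set M' : ℝ := ∫ x, Real.exp (l * x) ∂ν' with hM'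
  have hMpos : 0 < M := integral_exp_pos hintν
  have hM'pos : 0 < M' := integral_exp_pos hint'
  have hasm : ∀ (c : ℝ) (μ0 : Measure ℝ), AEStronglyMeasurable (fun x : ℝ => Real.exp (c * x)) μ0 :=
    fun c μ0 => ((measurable_id.const_mul c).exp).aestronglyMeasurable
  have hmgf_inl : ∀ i, mgf (Z (Sum.inl i)) P l = M := by
    intro i
    have h2 : M = ∫ ω, Real.exp (-l * X i ω) ∂P := by
      rw [hM, ← hX i, integral_map (hXm i).aemeasurable (hasm (-l) _)]
    rw [h2]
    show ∫ ω, Real.exp (l * (-(X i ω))) ∂P = _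
    congr 1
    funext ω
    ring_nf
  have hmgf_inr : ∀ i, mgf (Z (Sum.inr i)) P l = M' := by
    intro i
    have h2 : M' = ∫ ω, Real.exp (l * Y i ω) ∂P := by
      rw [hM', ← hY i, integral_map (hYm i).aemeasurable (hasm l _)]
    rw [h2]
    rfl
  have hmgfW : mgf (∑ j ∈ s, Z j) P l = M ^ N * M' ^ N := by
    rw [hZindep.mgf_sum hZmeas s, hs, Finset.prod_disjSum,
      Finset.prod_congr rfl (fun i _ => hmgf_inl i),
      Finset.prod_congr rfl (fun i _ => hmgf_inr i),
      Finset.prod_const, Finset.prod_const, Finset.card_range]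
  rw [hmgfW] at markov
  rw [hset]
  have hPle : P {ω | 0 ≤ (∑ j ∈ s, Z j) ω} ≤ ENNReal.ofReal (M ^ N * M' ^ N) := by
    rw [ENNReal.le_ofReal_iff_toReal_le (measure_ne_top P _)
      (by positivity)]
    exact markov
  calc ENNReal.log (P {ω | 0 ≤ (∑ j ∈ s, Z j) ω})
      ≤ ENNReal.log (ENNReal.ofReal (M ^ N * M' ^ N)) := ENNReal.log_monotone hPle
    _ = ((Real.log (M ^ N * M' ^ N) : ℝ) : EReal) := by
        rw [ENNReal.log_ofReal_of_pos (by positivity)]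
    _ = (((N : ℝ) * (Real.log M' + Real.log M) : ℝ) : EReal) := by
        rw [Real.log_mul (by positivity) (by positivity), Real.log_pow, Real.log_pow]
        norm_cast
        ring
    _ = ((N : ℝ) : EReal) * (logMgf ν' l + logMgf ν (-l)) := by
        rw [logMgf_eq_log ν' hint', logMgf_eq_log ν hintν, ← EReal.coe_add, ← EReal.coe_mul]

end Helpers

/-- Let `ν, ν'` be probability measures on ℝ with finite first moments and means
`E(ν) > E(ν')`. Let `(X_i)` and `(Y_i)` be mutually independent i.i.d. sequences with laws
`ν` and `ν'` respectively. Then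
`limsup_N (1/N) ln P(X̄_N ≤ Ȳ_N) ≤ − inf_{x ∈ [E(ν'), E(ν)]} (φ*_{ν'}(x) + φ*_ν(x))`. -/
theorem limsup_log_prob_avg_le {Ω : Type*} [MeasurableSpace Ω]
    (P : Measure Ω) [IsProbabilityMeasure P]
    (ν ν' : Measure ℝ) [IsProbabilityMeasure ν] [IsProbabilityMeasure ν']
    (hint : Integrable (fun x => x) ν) (hint' : Integrable (fun x => x) ν')
    (hmean : Emean ν' < Emean ν)
    (X Y : ℕ → Ω → ℝ)
    (hXm : ∀ i, Measurable (X i)) (hYm : ∀ i, Measurable (Y i))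
    (hindep : iIndepFun (Sum.elim X Y) P)
    (hX : ∀ i, P.map (X i) = ν) (hY : ∀ i, P.map (Y i) = ν') :
    Filter.limsup (fun N : ℕ =>
        (((N : ℝ)⁻¹ : ℝ) : EReal) *
          ENNReal.log (P {ω | (∑ i ∈ Finset.range N, X i ω) / (N : ℝ)
                                ≤ (∑ i ∈ Finset.range N, Y i ω) / (N : ℝ)}))
        Filter.atTop
      ≤ - ⨅ x ∈ Set.Icc (Emean ν') (Emean ν), (phiStar ν' x + phiStar ν x) := by
  classical
  set mu' := Emean ν' with hmu'def
  set mu := Emean ν with hmudef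
  -- Step 1: Chernoff bound for each nonnegative λ
  have hch : ∀ l : ℝ, 0 ≤ l →
      Filter.limsup (fun N : ℕ =>
        (((N : ℝ)⁻¹ : ℝ) : EReal) *
          ENNReal.log (P {ω | (∑ i ∈ Finset.range N, X i ω) / (N : ℝ)
                                ≤ (∑ i ∈ Finset.range N, Y i ω) / (N : ℝ)}))
        Filter.atTop ≤ logMgf ν' l + logMgf ν (-l) := by
    intro l hl
    apply Filter.limsup_le_of_le (h := ?_)
    filter_upwards [Filter.eventually_ge_atTop 1] with N hN
    exact div_aux hN (chernoff P ν ν' X Y hXm hYm hindep hX hY hl hN)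
  set c : EReal := ⨅ l ∈ Set.Ici (0:ℝ), (logMgf ν' l + logMgf ν (-l)) with hcdef
  have hlc : Filter.limsup (fun N : ℕ =>
        (((N : ℝ)⁻¹ : ℝ) : EReal) *
          ENNReal.log (P {ω | (∑ i ∈ Finset.range N, X i ω) / (N : ℝ)
                                ≤ (∑ i ∈ Finset.range N, Y i ω) / (N : ℝ)}))
        Filter.atTop ≤ c := le_iInf₂ hch
  by_cases hcbot : c = ⊥
  · exact hlc.trans (by rw [hcbot]; exact bot_le)
  -- c is a real number ≤ 0
  have hc0 : c ≤ 0 := by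
    have h0 : (0:ℝ) ∈ Set.Ici (0:ℝ) := Set.self_mem_Ici
    have hle := iInf₂_le (f := fun (l : ℝ) (_ : l ∈ Set.Ici (0:ℝ)) =>
      logMgf ν' l + logMgf ν (-l)) 0 h0
    rw [hcdef]
    refine hle.trans ?_
    rw [neg_zero, logMgf_zero, logMgf_zero, add_zero]
  have hctop : c ≠ ⊤ := by
    intro h
    rw [h] at hc0
    exact absurd (top_le_iff.1 hc0) (by simp)
  set γ := c.toReal with hγdef
  have hceq : c = (γ : EReal) := (EReal.coe_toReal hctop hcbot).symm
  have hγ0 : γ ≤ 0 := by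
    rw [hceq] at hc0
    exact_mod_cast hc0
  set sR : ℝ := -γ with hsRdef
  have hs : 0 ≤ sR := by simp only [hsRdef]; linarith
  -- uniform lower bound on the "tilted" sums
  have hψ : ∀ l : ℝ, ((-sR : ℝ) : EReal) ≤ logMgf ν' l + logMgf ν (-l) := by
    intro l
    rcases le_or_gt 0 l with hl | hl
    · have hle := iInf₂_le (f := fun (l : ℝ) (_ : l ∈ Set.Ici (0:ℝ)) =>
        logMgf ν' l + logMgf ν (-l)) l hl
      rw [← hcdef] at hle
      refine le_trans (le_of_eq ?_) hle
      rw [hceq, hsRdef]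
      norm_num
    · have j1 : ((l * Emean ν' : ℝ) : EReal) ≤ logMgf ν' l := jensen_logMgf ν' hint' l
      have j2 : ((-l * Emean ν : ℝ) : EReal) ≤ logMgf ν (-l) := jensen_logMgf ν hint (-l)
      have hsum := add_le_add j1 j2
      rw [← EReal.coe_add] at hsum
      refine le_trans ?_ hsum
      have hre : -sR ≤ l * Emean ν' + -l * Emean ν := by
        nlinarith [mul_nonneg (neg_nonneg.2 hl.le) (sub_nonneg.2 hmean.le)]
      exact_mod_cast hre
  -- real-valued versions on the effective domains
  set D1 : Set ℝ := {a | logMgf ν' a ≠ ⊤} with hD1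
  set D2 : Set ℝ := {b | logMgf ν (-b) ≠ ⊤} with hD2
  set Ff : ℝ → ℝ := fun a => (logMgf ν' a).toReal with hFf
  set Gf : ℝ → ℝ := fun b => (logMgf ν (-b)).toReal with hGf
  have hFcoe : ∀ a ∈ D1, logMgf ν' a = ((Ff a : ℝ) : EReal) :=
    fun a ha => (EReal.coe_toReal ha (logMgf_ne_bot ν' a)).symm
  have hGcoe : ∀ b ∈ D2, logMgf ν (-b) = ((Gf b : ℝ) : EReal) :=
    fun b hb => (EReal.coe_toReal hb (logMgf_ne_bot ν (-b))).symm
  have h01 : (0:ℝ) ∈ D1 := by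
    show logMgf ν' 0 ≠ ⊤
    rw [logMgf_zero]
    simp
  have h02 : (0:ℝ) ∈ D2 := by
    show logMgf ν (-0) ≠ ⊤
    rw [neg_zero, logMgf_zero]
    simp
  have hJ1 : ∀ a ∈ D1, a * Emean ν' ≤ Ff a := by
    intro a ha
    have j := jensen_logMgf ν' hint' a
    rw [hFcoe a ha] at j
    exact_mod_cast j
  have hJ2 : ∀ b ∈ D2, -(b * Emean ν) ≤ Gf b := by
    intro b hb
    have j := jensen_logMgf ν hint (-b)
    rw [hGcoe b hb] at j
    have : -b * Emean ν ≤ Gf b := by exact_mod_cast j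
    linarith
  have hdiag : ∀ cc ∈ D1, cc ∈ D2 → -sR ≤ Ff cc + Gf cc := by
    intro cc h1 h2
    have hp := hψ cc
    rw [hFcoe cc h1, hGcoe cc h2, ← EReal.coe_add] at hp
    exact_mod_cast hp
  have hcvx : ∀ a a' b b' t : ℝ, a ∈ D1 → a' ∈ D1 → b ∈ D2 → b' ∈ D2 → 0 < t → t < 1 →
      t*a+(1-t)*a' = t*b+(1-t)*b' →
      -sR ≤ (t*Ff a+(1-t)*Ff a') + (t*Gf b+(1-t)*Gf b') := by
    intro a a' b b' t ha ha' hb hb' ht ht1 heq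
    obtain ⟨hD1c, hFc⟩ := logMgf_cvx ν' ht ht1 ha ha'
    obtain ⟨hD2c, hGc⟩ := logMgf_cvx ν ht ht1 hb hb'
    have e : t*(-b)+(1-t)*(-b') = -(t*b+(1-t)*b') := by ring
    rw [e] at hD2c hGc
    rw [← heq] at hD2c hGc
    have hmemD2 : (t*a+(1-t)*a') ∈ D2 := hD2c
    have hd := hdiag (t*a+(1-t)*a') hD1c hmemD2
    have hGf_eq : Gf (t*a+(1-t)*a') = (logMgf ν (-(t*a+(1-t)*a'))).toReal := rfl
    have hFf_eq : Ff (t*a+(1-t)*a') = (logMgf ν' (t*a+(1-t)*a')).toReal := rfl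
    simp only [hFf, hGf] at hd ⊢
    nlinarith [hFc, hGc, hd]
  obtain ⟨x₀, hx₀⟩ := feasible_aux hmean.le hs h01 h02 hJ1 hJ2 hdiag hcvx
  -- EReal constraints at x₀
  have hcons : ∀ a b : ℝ, (((a * x₀ : ℝ)) : EReal) - logMgf ν' a
      + ((((b * x₀ : ℝ)) : EReal) - logMgf ν b) ≤ (sR : EReal) := by
    intro a b
    by_cases ha : logMgf ν' a = ⊤
    · rw [ha, EReal.sub_top, EReal.bot_add]
      exact bot_le
    by_cases hb : logMgf ν b = ⊤
    · rw [hb, EReal.sub_top, EReal.add_bot]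
      exact bot_le
    have hbD2 : (-b) ∈ D2 := by
      show logMgf ν (-(-b)) ≠ ⊤
      rwa [neg_neg]
    have hreal := hx₀ a ha (-b) hbD2
    have hGfb : logMgf ν b = ((Gf (-b) : ℝ) : EReal) := by
      have := hGcoe (-b) hbD2
      rwa [neg_neg] at this
    rw [hFcoe a ha, hGfb, ← EReal.coe_sub, ← EReal.coe_sub, ← EReal.coe_add]
    have hexp : (a - -b) * x₀ = a * x₀ + b * x₀ := by ring
    rw [hexp] at hreal
    exact_mod_cast (by linarith : (a * x₀ - Ff a) + (b * x₀ - Gf (-b)) ≤ sR)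
  have hsum₀ : phiStar ν' x₀ + phiStar ν x₀ ≤ (sR : EReal) := by
    refine sup_add_sup_le (A := fun a => ((a * x₀ : ℝ) : EReal) - logMgf ν' a)
      (B := fun b => ((b * x₀ : ℝ) : EReal) - logMgf ν b) ?_ ?_ ?_ ?_ hcons
    · show ((0 * x₀ : ℝ) : EReal) - logMgf ν' 0 = 0
      rw [logMgf_zero]; simp
    · show ((0 * x₀ : ℝ) : EReal) - logMgf ν 0 = 0
      rw [logMgf_zero]; simp
    · exact fun a => coe_sub_ne_top (logMgf_ne_bot ν' a)
    · exact fun b => coe_sub_ne_top (logMgf_ne_bot ν b)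
  -- clamp x₀ into the interval
  have hx₁ : ∃ x₁ ∈ Set.Icc (Emean ν') (Emean ν),
      phiStar ν' x₁ + phiStar ν x₁ ≤ (sR : EReal) := by
    rcases lt_or_ge x₀ (Emean ν') with hlt | hge
    · refine ⟨Emean ν', ⟨le_refl _, hmean.le⟩, ?_⟩
      have h1 : phiStar ν' (Emean ν') ≤ 0 := phiStar_mean_nonpos ν' hint'
      have h2 : phiStar ν (Emean ν') ≤ phiStar ν x₀ := phiStar_anti ν hint hlt.le hmean.le
      calc phiStar ν' (Emean ν') + phiStar ν (Emean ν') ≤ 0 + phiStar ν x₀ := add_le_add h1 h2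
        _ = phiStar ν x₀ := zero_add _
        _ ≤ phiStar ν' x₀ + phiStar ν x₀ := le_add_of_nonneg_left (phiStar_nonneg ν' x₀)
        _ ≤ (sR : EReal) := hsum₀
    rcases le_or_gt x₀ (Emean ν) with hle | hgt
    · exact ⟨x₀, ⟨hge, hle⟩, hsum₀⟩
    · refine ⟨Emean ν, ⟨hmean.le, le_refl _⟩, ?_⟩
      have h1 : phiStar ν' (Emean ν) ≤ phiStar ν' x₀ := phiStar_mono ν' hint' hmean.le hgt.le
      have h2 : phiStar ν (Emean ν) ≤ 0 := phiStar_mean_nonpos ν hint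
      calc phiStar ν' (Emean ν) + phiStar ν (Emean ν) ≤ phiStar ν' x₀ + 0 := add_le_add h1 h2
        _ = phiStar ν' x₀ := add_zero _
        _ ≤ phiStar ν' x₀ + phiStar ν x₀ := le_add_of_nonneg_right (phiStar_nonneg ν x₀)
        _ ≤ (sR : EReal) := hsum₀
  obtain ⟨x₁, hx₁mem, hx₁le⟩ := hx₁
  have hinf : (⨅ x ∈ Set.Icc (Emean ν') (Emean ν), (phiStar ν' x + phiStar ν x)) ≤ (sR : EReal) :=
    le_trans (iInf₂_le x₁ hx₁mem) hx₁le
  refine hlc.trans ?_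
  have hceq2 : c = -((sR : ℝ) : EReal) := by
    rw [hceq, hsRdef, EReal.coe_neg, neg_neg]
  rw [hceq2]
  exact EReal.neg_le_neg_iff.2 hinf

end
end

section
/- Consider the model D = P[0,1] of all Borel probability measures on [0,1]. For every ν ∈ P[0,1]: φ*_ν(x) = Linf≤(x,ν) for all x ≤ E(ν), and φ*_ν(x) = Linf≥(x,ν) for all x ≥ E(ν), where both sides take values in [0,+∞]. -/
open MeasureTheory Filter Set ProbabilityTheory
open scoped ENNReal NNReal

noncomputable section

section Aux

lemma aeIcc {ν : Measure ℝ} (h01 : ν (Set.Icc (0:ℝ) 1)ᶜ = 0) : ∀ᵐ t ∂ν, t ∈ Icc (0:ℝ) 1 :=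
  ae_iff.2 (by rw [show {a : ℝ | ¬ a ∈ Icc (0:ℝ) 1} = (Icc (0:ℝ) 1)ᶜ from rfl]; exact h01)

lemma int_bdd {ν : Measure ℝ} [IsFiniteMeasure ν] {f : ℝ → ℝ} (hm : AEStronglyMeasurable f ν)
    {C : ℝ} (h : ∀ᵐ t ∂ν, ‖f t‖ ≤ C) : Integrable f ν :=
  (integrable_const C).mono' hm h

/-- Normalisation constant of the exponential tilt. -/
def Zf (ν : Measure ℝ) (l : ℝ) : ℝ := ∫ t, Real.exp (l * t) ∂ν

lemma exp_ubd {l t : ℝ} (ht : t ∈ Icc (0:ℝ) 1) : Real.exp (l*t) ≤ Real.exp |l| := by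
  apply Real.exp_le_exp.2
  calc l * t ≤ |l * t| := le_abs_self _
  _ = |l| * |t| := abs_mul _ _
  _ ≤ |l| * 1 := by
      have : |t| ≤ 1 := abs_le.2 ⟨by linarith [ht.1], ht.2⟩
      nlinarith [abs_nonneg l]
  _ = |l| := mul_one _

lemma exp_lbd {l t : ℝ} (ht : t ∈ Icc (0:ℝ) 1) : min 1 (Real.exp l) ≤ Real.exp (l*t) := by
  rcases le_or_gt 0 l with h | h
  · exact le_trans (min_le_left _ _) (by rw [← Real.exp_zero]; exact Real.exp_le_exp.2 (by nlinarith [ht.1]))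
  · exact le_trans (min_le_right _ _) (Real.exp_le_exp.2 (by nlinarith [ht.1, ht.2]))

lemma integrable_exp_tilt {ν : Measure ℝ} [IsFiniteMeasure ν] (h01 : ν (Set.Icc (0:ℝ) 1)ᶜ = 0)
    (l : ℝ) : Integrable (fun t => Real.exp (l*t)) ν := by
  refine int_bdd (C := Real.exp |l|)
    ((Real.continuous_exp.comp (continuous_const.mul continuous_id)).aestronglyMeasurable) ?_
  filter_upwards [aeIcc h01] with t ht
  rw [Real.norm_eq_abs, abs_of_pos (Real.exp_pos _)]
  exact exp_ubd ht

lemma Zf_pos {ν : Measure ℝ} [IsProbabilityMeasure ν] (h01 : ν (Set.Icc (0:ℝ) 1)ᶜ = 0)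
    (l : ℝ) : 0 < Zf ν l := by
  have hc : (0:ℝ) < min 1 (Real.exp l) := lt_min one_pos (Real.exp_pos _)
  calc (0:ℝ) < min 1 (Real.exp l) := hc
  _ = ∫ _t, min 1 (Real.exp l) ∂ν := by simp
  _ ≤ Zf ν l := by
      refine integral_mono_ae (integrable_const _) (integrable_exp_tilt h01 l) ?_
      filter_upwards [aeIcc h01] with t ht using exp_lbd ht

lemma Zf_ofReal {ν : Measure ℝ} [IsProbabilityMeasure ν] (h01 : ν (Set.Icc (0:ℝ) 1)ᶜ = 0)
    (l : ℝ) : ∫⁻ t, ENNReal.ofReal (Real.exp (l * t)) ∂ν = ENNReal.ofReal (Zf ν l) :=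
  (ofReal_integral_eq_lintegral_ofReal (integrable_exp_tilt h01 l)
    (Eventually.of_forall fun t => (Real.exp_pos _).le)).symm

lemma logMgf_eq {ν : Measure ℝ} [IsProbabilityMeasure ν] (h01 : ν (Set.Icc (0:ℝ) 1)ᶜ = 0)
    (l : ℝ) : logMgf ν l = ((Real.log (Zf ν l) : ℝ) : EReal) := by
  rw [logMgf, Zf_ofReal h01 l, ENNReal.log_ofReal_of_pos (Zf_pos h01 l)]

lemma phiStar_eq {ν : Measure ℝ} [IsProbabilityMeasure ν] (h01 : ν (Set.Icc (0:ℝ) 1)ᶜ = 0)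
    (x : ℝ) : phiStar ν x = ⨆ l : ℝ, (((l*x - Real.log (Zf ν l)) : ℝ) : EReal) := by
  rw [phiStar]
  congr 1
  ext l
  rw [logMgf_eq h01 l, ← EReal.coe_sub]

end Aux
section Gibbs

/-- Jensen's inequality for `exp`. -/
lemma exp_integral_le {μ : Measure ℝ} [IsProbabilityMeasure μ] {h : ℝ → ℝ}
    (hint : Integrable h μ) (hexp : Integrable (fun t => Real.exp (h t)) μ) :
    Real.exp (∫ t, h t ∂μ) ≤ ∫ t, Real.exp (h t) ∂μ := by
  have := convexOn_exp.map_integral_le (μ := μ) (f := h)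
    Real.continuous_exp.continuousOn isClosed_univ
    (Eventually.of_forall fun t => mem_univ _) hint (by exact hexp)
  simpa using this

/-- Gibbs inequality: `λ E(ζ) - log Z(λ) ≤ ∫ log (dζ/dν) dζ`. -/
lemma gibbs {ν ζ : Measure ℝ} [IsProbabilityMeasure ν] [IsProbabilityMeasure ζ]
    (h01ν : ν (Set.Icc (0:ℝ) 1)ᶜ = 0) (h01ζ : ζ (Set.Icc (0:ℝ) 1)ᶜ = 0)
    (hac : ζ ≪ ν) (hKLint : Integrable (fun x => Real.log ((ζ.rnDeriv ν x).toReal)) ζ)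
    (l : ℝ) :
    l * Emean ζ - Real.log (Zf ν l) ≤ ∫ x, Real.log ((ζ.rnDeriv ν x).toReal) ∂ζ := by
  set g := ζ.rnDeriv ν with hg
  have hgm : Measurable g := Measure.measurable_rnDeriv ζ ν
  set h : ℝ → ℝ := fun t => l * t - Real.log (g t).toReal with hh
  have hhm : Measurable h := by
    apply Measurable.sub
    · exact (continuous_const.mul continuous_id).measurable
    · exact Real.measurable_log.comp hgm.ennreal_toReal
  -- a.e. transfers
  have haele : ae ζ ≤ ae ν := Measure.ae_le_iff_absolutelyContinuous.2 hac
  have hlttop : ∀ᵐ t ∂ν, g t < ⊤ := Measure.rnDeriv_lt_top ζ ν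
  -- key lintegral bound
  have hkey : ∫⁻ t, ENNReal.ofReal (Real.exp (h t)) ∂ζ ≤ ENNReal.ofReal (Zf ν l) := by
    conv_lhs => rw [← Measure.withDensity_rnDeriv_eq ζ ν hac]
    rw [← hg]
    rw [lintegral_withDensity_eq_lintegral_mul ν hgm
      (show Measurable fun t => ENNReal.ofReal (Real.exp (h t)) from
        ENNReal.measurable_ofReal.comp (Real.measurable_exp.comp hhm))]
    rw [← Zf_ofReal h01ν l]
    refine lintegral_mono_ae ?_
    filter_upwards [hlttop] with t hlt
    rcases eq_or_ne (g t) 0 with h0 | h0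
    · simp [Pi.mul_apply, h0]
    · have hgt : 0 < (g t).toReal := ENNReal.toReal_pos h0 hlt.ne
      have : Real.exp (h t) = Real.exp (l * t) / (g t).toReal := by
        rw [hh]
        rw [Real.exp_sub, Real.exp_log hgt]
      rw [Pi.mul_apply, this, ENNReal.ofReal_div_of_pos hgt,
        ENNReal.ofReal_toReal hlt.ne]
      rw [ENNReal.div_eq_inv_mul, ← mul_assoc, ENNReal.mul_inv_cancel h0 hlt.ne, one_mul]
  -- integrability of exp ∘ h under ζ
  have hexpint : Integrable (fun t => Real.exp (h t)) ζ := by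
    refine ⟨(Real.measurable_exp.comp hhm).aestronglyMeasurable, ?_⟩
    rw [hasFiniteIntegral_iff_norm]
    calc ∫⁻ t, ENNReal.ofReal ‖Real.exp (h t)‖ ∂ζ
        = ∫⁻ t, ENNReal.ofReal (Real.exp (h t)) ∂ζ := by
          congr 1; ext t; rw [Real.norm_eq_abs, abs_of_pos (Real.exp_pos _)]
      _ ≤ ENNReal.ofReal (Zf ν l) := hkey
      _ < ⊤ := ENNReal.ofReal_lt_top
  have hexple : ∫ t, Real.exp (h t) ∂ζ ≤ Zf ν l := by
    rw [← ENNReal.ofReal_le_ofReal_iff (Zf_pos h01ν l).le,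
      ofReal_integral_eq_lintegral_ofReal hexpint
      (Eventually.of_forall fun t => (Real.exp_pos _).le)]
    exact hkey
  -- integrability of h under ζ
  have hidint : Integrable (fun t => l * t) ζ := by
    refine int_bdd (C := |l|) ((continuous_const.mul continuous_id).aestronglyMeasurable) ?_
    filter_upwards [aeIcc h01ζ] with t ht
    rw [Real.norm_eq_abs, abs_mul]
    have : |t| ≤ 1 := abs_le.2 ⟨by linarith [ht.1], ht.2⟩
    nlinarith [abs_nonneg l]
  have hhint : Integrable h ζ := hidint.sub hKLint
  -- Jensen
  have := exp_integral_le hhint hexpint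
  have hle : ∫ t, h t ∂ζ ≤ Real.log (Zf ν l) :=
    (Real.le_log_iff_exp_le (Zf_pos h01ν l)).2 (this.trans hexple)
  have hsplit : ∫ t, h t ∂ζ = l * Emean ζ - ∫ x, Real.log ((ζ.rnDeriv ν x).toReal) ∂ζ := by
    rw [hh, integral_sub hidint hKLint, integral_const_mul, Emean]
  linarith [hle, hsplit ▸ hle]

end Gibbs
section PartA

lemma Zf_zero {ν : Measure ℝ} [IsProbabilityMeasure ν] : Zf ν 0 = 1 := by
  simp [Zf]

lemma integrable_id_cc {ζ : Measure ℝ} [IsFiniteMeasure ζ] (h01 : ζ (Set.Icc (0:ℝ) 1)ᶜ = 0) :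
    Integrable (fun t : ℝ => t) ζ := by
  refine int_bdd (C := 1) aestronglyMeasurable_id ?_
  filter_upwards [aeIcc h01] with t ht
  rw [Real.norm_eq_abs]
  exact abs_le.2 ⟨by linarith [ht.1], ht.2⟩

/-- Jensen: `l * E(ν) ≤ log Z(λ)`. -/
lemma mul_Emean_le_log_Zf {ν : Measure ℝ} [IsProbabilityMeasure ν]
    (h01 : ν (Set.Icc (0:ℝ) 1)ᶜ = 0) (l : ℝ) : l * Emean ν ≤ Real.log (Zf ν l) := by
  have hid : Integrable (fun t : ℝ => l * t) ν :=
    (integrable_id_cc h01).const_mul l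
  have h := exp_integral_le hid (integrable_exp_tilt h01 l)
  rw [integral_const_mul] at h
  exact (Real.le_log_iff_exp_le (Zf_pos h01 l)).2 h

/-- The KL integrand has nonnegative integral (Gibbs at `λ = 0`). -/
lemma KL_integral_nonneg {ν ζ : Measure ℝ} [IsProbabilityMeasure ν] [IsProbabilityMeasure ζ]
    (h01ν : ν (Set.Icc (0:ℝ) 1)ᶜ = 0) (h01ζ : ζ (Set.Icc (0:ℝ) 1)ᶜ = 0)
    (hac : ζ ≪ ν) (hKLint : Integrable (fun x => Real.log ((ζ.rnDeriv ν x).toReal)) ζ) :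
    0 ≤ ∫ x, Real.log ((ζ.rnDeriv ν x).toReal) ∂ζ := by
  have := gibbs h01ν h01ζ hac hKLint 0
  rw [Zf_zero] at this
  simpa using this

/-- Part A: `φ*_ν(x) ≤ KL(ζ, ν)` whenever `E(ζ) ≤ x ≤ E(ν)`. -/
lemma phiStar_le_KL {ν ζ : Measure ℝ} [IsProbabilityMeasure ν] [IsProbabilityMeasure ζ]
    (h01ν : ν (Set.Icc (0:ℝ) 1)ᶜ = 0) (h01ζ : ζ (Set.Icc (0:ℝ) 1)ᶜ = 0)
    {x : ℝ} (hζx : Emean ζ ≤ x) (hx : x ≤ Emean ν) :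
    phiStar ν x ≤ (KL ζ ν : EReal) := by
  rw [phiStar_eq h01ν x]
  refine iSup_le fun l => ?_
  rw [KL]
  split_ifs with hcond
  · obtain ⟨hac, hKLint⟩ := hcond
    set I := ∫ x, Real.log ((ζ.rnDeriv ν x).toReal) ∂ζ with hI
    have hI0 : 0 ≤ I := KL_integral_nonneg h01ν h01ζ hac hKLint
    have hcoe : ((ENNReal.ofReal I : ℝ≥0∞) : EReal) = (I : EReal) := by
      rw [EReal.coe_ennreal_ofReal, max_eq_left hI0]
    rw [hcoe, EReal.coe_le_coe_iff]
    rcases le_or_gt l 0 with hl | hl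
    · have h1 : l * x ≤ l * Emean ζ := by nlinarith
      have := gibbs h01ν h01ζ hac hKLint l
      linarith
    · have h1 : l * x ≤ l * Emean ν := by nlinarith
      have h2 := mul_Emean_le_log_Zf h01ν l
      linarith
  · exact le_top

end PartA
section Tilt

variable {ν : Measure ℝ} {ρ : ℝ → ℝ}

lemma tilt_isProb [IsProbabilityMeasure ν] (hρ0 : ∀ t, 0 ≤ ρ t)
    (hint : Integrable ρ ν) (hmass : ∫ t, ρ t ∂ν = 1) :
    IsProbabilityMeasure (ν.withDensity (fun t => ENNReal.ofReal (ρ t))) := by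
  constructor
  rw [withDensity_apply _ MeasurableSet.univ, Measure.restrict_univ,
    ← ofReal_integral_eq_lintegral_ofReal hint (Eventually.of_forall hρ0), hmass,
    ENNReal.ofReal_one]

lemma tilt_null_compl (h01 : ν (Set.Icc (0:ℝ) 1)ᶜ = 0) :
    (ν.withDensity (fun t => ENNReal.ofReal (ρ t))) (Set.Icc (0:ℝ) 1)ᶜ = 0 := by
  rw [withDensity_apply _ measurableSet_Icc.compl, Measure.restrict_eq_zero.2 h01,
    lintegral_zero_measure]

lemma tilt_integral (hm : Measurable ρ) (hρ0 : ∀ t, 0 ≤ ρ t) (g : ℝ → ℝ) :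
    ∫ t, g t ∂(ν.withDensity (fun t => ENNReal.ofReal (ρ t))) = ∫ t, ρ t * g t ∂ν := by
  have h1 : (fun t => ENNReal.ofReal (ρ t)) = (fun t => ((Real.toNNReal (ρ t) : ℝ≥0) : ℝ≥0∞)) :=
    rfl
  rw [h1, integral_withDensity_eq_integral_smul
    (show Measurable fun t => Real.toNNReal (ρ t) from measurable_real_toNNReal.comp hm) g]
  congr 1
  ext t
  rw [NNReal.smul_def, smul_eq_mul, Real.coe_toNNReal _ (hρ0 t)]

lemma tilt_KL [IsProbabilityMeasure ν] (hm : Measurable ρ) (hρ0 : ∀ t, 0 ≤ ρ t)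
    (hli : Integrable (fun t => Real.log (ρ t)) (ν.withDensity (fun t => ENNReal.ofReal (ρ t)))) :
    KL (ν.withDensity (fun t => ENNReal.ofReal (ρ t))) ν
      = ENNReal.ofReal (∫ t, Real.log (ρ t) ∂(ν.withDensity (fun t => ENNReal.ofReal (ρ t)))) := by
  set ζ := ν.withDensity (fun t => ENNReal.ofReal (ρ t)) with hζ
  have hac : ζ ≪ ν := withDensity_absolutelyContinuous _ _
  have hrn : (fun t => Real.log ((ζ.rnDeriv ν t).toReal)) =ᵐ[ζ] (fun t => Real.log (ρ t)) := by
    have h1 : ζ.rnDeriv ν =ᵐ[ν] (fun t => ENNReal.ofReal (ρ t)) :=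
      Measure.rnDeriv_withDensity ν (ENNReal.measurable_ofReal.comp hm)
    refine (Measure.ae_le_iff_absolutelyContinuous.2 hac) ?_
    filter_upwards [h1] with t ht
    rw [ht, ENNReal.toReal_ofReal (hρ0 t)]
  rw [KL, if_pos ⟨hac, (integrable_congr hrn).2 hli⟩, integral_congr_ae hrn]

end Tilt
section LowerEnd

open scoped Topology

/-- EReal sup of an unbounded real family is `⊤`. -/
lemma iSup_coe_eq_top {f : ℝ → ℝ} (h : ∀ M : ℝ, ∃ i, M ≤ f i) :
    ⨆ i, ((f i : ℝ) : EReal) = ⊤ := by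
  refine iSup_eq_top |>.2 fun b hb => ?_
  induction b with
  | bot => exact ⟨0, by exact_mod_cast EReal.bot_lt_coe _⟩
  | coe r =>
      obtain ⟨i, hi⟩ := h (r + 1)
      exact ⟨i, by exact_mod_cast lt_of_lt_of_le (by linarith) hi⟩
  | top => exact absurd hb (lt_irrefl _)

lemma le_iSup_of_tendsto_atBot {f : ℝ → ℝ} {L : ℝ} (h : Tendsto f atBot (𝓝 L)) :
    (L : EReal) ≤ ⨆ l : ℝ, ((f l : ℝ) : EReal) := by
  have h2 : Tendsto (fun l => ((f l : ℝ) : EReal)) atBot (𝓝 (L : EReal)) :=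
    (continuous_coe_real_ereal.tendsto L).comp h
  calc (L : EReal) = liminf (fun l => ((f l : ℝ) : EReal)) atBot := h2.liminf_eq.symm
    _ ≤ limsup (fun l => ((f l : ℝ) : EReal)) atBot := liminf_le_limsup
    _ ≤ ⨆ l : ℝ, ((f l : ℝ) : EReal) := limsup_le_iSup

variable {ν : Measure ℝ}

/-- Lower end of the essential support. -/
def emin (ν : Measure ℝ) : ℝ := sInf {t | ν (Set.Iic t) ≠ 0}

lemma emin_mem1 [IsProbabilityMeasure ν] (h01 : ν (Set.Icc (0:ℝ) 1)ᶜ = 0) :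
    ν (Set.Iic (1:ℝ)) ≠ 0 := by
  have h2 : ν (Set.Ioi (1:ℝ)) = 0 := by
    refine measure_mono_null (fun t ht => ?_) h01
    simp only [mem_compl_iff, mem_Icc, not_and, not_le]
    intro; exact ht
  have := (prob_compl_eq_zero_iff (μ := ν) measurableSet_Iic).1 (by rwa [compl_Iic])
  simp [this]

lemma emin_bddBelow (h01 : ν (Set.Icc (0:ℝ) 1)ᶜ = 0) :
    BddBelow {t | ν (Set.Iic t) ≠ 0} := by
  refine ⟨0, fun t ht => ?_⟩
  by_contra hneg
  push_neg at hneg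
  refine ht (measure_mono_null (fun s hs => ?_) h01)
  simp only [mem_Iic] at hs
  simp only [mem_compl_iff, mem_Icc, not_and, not_le]
  intro h0; linarith

lemma emin_nonneg [IsProbabilityMeasure ν] (h01 : ν (Set.Icc (0:ℝ) 1)ᶜ = 0) :
    0 ≤ emin ν :=
  le_csInf ⟨1, emin_mem1 h01⟩ (fun t ht => by
    by_contra hneg
    push_neg at hneg
    refine ht (measure_mono_null (fun s hs => ?_) h01)
    simp only [mem_Iic] at hs
    simp only [mem_compl_iff, mem_Icc, not_and, not_le]
    intro h0; linarith)

lemma emin_le_one [IsProbabilityMeasure ν] (h01 : ν (Set.Icc (0:ℝ) 1)ᶜ = 0) :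
    emin ν ≤ 1 :=
  csInf_le (emin_bddBelow h01) (emin_mem1 h01)

lemma emin_Iio_null (h01 : ν (Set.Icc (0:ℝ) 1)ᶜ = 0) : ν (Set.Iio (emin ν)) = 0 := by
  have hset : Set.Iio (emin ν) = ⋃ n : ℕ, Set.Iic (emin ν - ((n:ℝ)+1)⁻¹) := by
    ext t
    simp only [mem_Iio, mem_iUnion, mem_Iic]
    constructor
    · intro ht
      obtain ⟨n, hn⟩ := exists_nat_one_div_lt (show (0:ℝ) < emin ν - t by linarith)
      refine ⟨n, ?_⟩
      rw [one_div] at hn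
      linarith
    · rintro ⟨n, hn⟩
      have : (0:ℝ) < (n+1:ℝ)⁻¹ := by positivity
      linarith
  rw [hset]
  refine measure_iUnion_null fun n => ?_
  by_contra hne
  have : emin ν ≤ emin ν - ((n:ℝ)+1)⁻¹ := csInf_le (emin_bddBelow h01) hne
  have : (0:ℝ) < ((n:ℝ)+1)⁻¹ := by positivity
  linarith

lemma emin_ae_le (h01 : ν (Set.Icc (0:ℝ) 1)ᶜ = 0) : ∀ᵐ t ∂ν, emin ν ≤ t := by
  refine ae_iff.2 ?_
  have : {t : ℝ | ¬ emin ν ≤ t} = Set.Iio (emin ν) := by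
    ext t; simp only [mem_setOf_eq, not_le, mem_Iio]
  rw [this]
  exact emin_Iio_null h01

lemma emin_Iic_pos (h01 : ν (Set.Icc (0:ℝ) 1)ᶜ = 0) {c : ℝ} (hc : emin ν < c)
    (hne : {t | ν (Set.Iic t) ≠ 0}.Nonempty) : ν (Set.Iic c) ≠ 0 := by
  obtain ⟨t, htA, htc⟩ := exists_lt_of_csInf_lt hne hc
  exact fun h => htA (measure_mono_null (Iic_subset_Iic.2 htc.le) h)

/-- Any measure absolutely continuous w.r.t. `ν` has mean at least `emin ν`. -/
lemma emin_le_Emean {ζ : Measure ℝ} [IsProbabilityMeasure ζ]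
    (h01 : ν (Set.Icc (0:ℝ) 1)ᶜ = 0) (h01ζ : ζ (Set.Icc (0:ℝ) 1)ᶜ = 0)
    (hac : ζ ≪ ν) : emin ν ≤ Emean ζ := by
  have hae : ∀ᵐ t ∂ζ, emin ν ≤ t :=
    (Measure.ae_le_iff_absolutelyContinuous.2 hac) (emin_ae_le h01)
  have : Emean ζ = ∫ t, t ∂ζ := rfl
  calc emin ν = ∫ _t, emin ν ∂ζ := by simp
    _ ≤ ∫ t, t ∂ζ := integral_mono_ae (integrable_const _) (integrable_id_cc h01ζ) hae
    _ = Emean ζ := rfl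

/-- If moreover `ν` has no atom at `emin ν`, the mean is strictly bigger. -/
lemma emin_lt_Emean {ζ : Measure ℝ} [IsProbabilityMeasure ζ]
    (h01 : ν (Set.Icc (0:ℝ) 1)ᶜ = 0) (h01ζ : ζ (Set.Icc (0:ℝ) 1)ᶜ = 0)
    (hac : ζ ≪ ν) (hatom : ν {emin ν} = 0) : emin ν < Emean ζ := by
  rcases lt_or_eq_of_le (emin_le_Emean h01 h01ζ hac) with h | h
  · exact h
  · exfalso
    have hae : ∀ᵐ t ∂ζ, emin ν ≤ t :=
      (Measure.ae_le_iff_absolutelyContinuous.2 hac) (emin_ae_le h01)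
    have hne : ∀ᵐ t ∂ζ, t ≠ emin ν := by
      refine ae_iff.2 ?_
      have : {t : ℝ | ¬ t ≠ emin ν} = {emin ν} := by ext t; simp
      rw [this]
      exact hac hatom
    have hint : Integrable (fun t : ℝ => t - emin ν) ζ :=
      (integrable_id_cc h01ζ).sub (integrable_const _)
    have hzero : ∫ t, (t - emin ν) ∂ζ = 0 := by
      rw [integral_sub (integrable_id_cc h01ζ) (integrable_const _)]
      simp only [integral_const, probReal_univ, measure_univ, ENNReal.toReal_one, one_smul, smul_eq_mul]
      rw [show (∫ a : ℝ, a ∂ζ) = Emean ζ from rfl, ← h]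
      ring
    have := (integral_eq_zero_iff_of_nonneg_ae
      (by filter_upwards [hae] with t ht
          simp only [Pi.zero_apply]
          linarith) hint).1 hzero
    obtain ⟨t, ht1, ht2⟩ := (this.and hne).exists
    simp only [Pi.zero_apply, sub_eq_zero] at ht1
    exact ht2 ht1

end LowerEnd
section Psi

open scoped Topology

variable {ν : Measure ℝ}

def Wf (ν : Measure ℝ) (m l : ℝ) : ℝ := ∫ t, Real.exp (l * (t - m)) ∂ν

lemma Zf_eq_Wf (m l : ℝ) : Zf ν l = Real.exp (l*m) * Wf ν m l := by
  rw [Zf, Wf, ← integral_const_mul]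
  congr 1
  ext t
  rw [← Real.exp_add]
  ring_nf

lemma Wf_pos [IsProbabilityMeasure ν] (h01 : ν (Set.Icc (0:ℝ) 1)ᶜ = 0) (m l : ℝ) :
    0 < Wf ν m l := by
  have h := Zf_pos h01 l
  rw [Zf_eq_Wf m l] at h
  by_contra hW
  push_neg at hW
  nlinarith [Real.exp_pos (l*m)]

lemma Wf_tendsto [IsProbabilityMeasure ν] {m : ℝ} (hm : ∀ᵐ t ∂ν, m ≤ t) :
    Tendsto (fun l => Wf ν m l) atBot (𝓝 ((ν {m}).toReal)) := by
  have key : Tendsto (fun l => ∫ t, Real.exp (l * (t - m)) ∂ν) atBot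
      (𝓝 (∫ t, Set.indicator {m} (fun _ => (1:ℝ)) t ∂ν)) := by
    refine tendsto_integral_filter_of_dominated_convergence (bound := fun _ => (1:ℝ)) ?_ ?_
      (integrable_const 1) ?_
    · exact Eventually.of_forall fun l =>
        (Real.continuous_exp.comp (continuous_const.mul (continuous_id.sub continuous_const))).aestronglyMeasurable
    · filter_upwards [eventually_le_atBot (0:ℝ)] with l hl
      filter_upwards [hm] with t ht
      rw [Real.norm_eq_abs, abs_of_pos (Real.exp_pos _), ← Real.exp_zero]
      exact Real.exp_le_exp.2 (by nlinarith)
    · filter_upwards [hm] with t ht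
      rcases eq_or_lt_of_le ht with h | h
      · have : (fun l => Real.exp (l * (t - m))) = fun _ => (1:ℝ) := by
          ext l; rw [← h]; simp
        rw [this, Set.indicator_of_mem (by rw [← h]; rfl)]
        exact tendsto_const_nhds
      · rw [Set.indicator_of_notMem (by simp only [Set.mem_singleton_iff]; rintro rfl; exact lt_irrefl _ h)]
        exact Real.tendsto_exp_atBot.comp (tendsto_id.atBot_mul_const (by linarith))
  rwa [integral_indicator_const (1:ℝ) (measurableSet_singleton m), smul_eq_mul, mul_one] at key

def Nf (ν : Measure ℝ) (l : ℝ) : ℝ := ∫ t, Real.exp (l * t) * t ∂ν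

set_option maxHeartbeats 1000000 in
lemma cont_integral [IsFiniteMeasure ν] (h01 : ν (Set.Icc (0:ℝ) 1)ᶜ = 0) {g : ℝ → ℝ}
    (hg : Continuous g) (hb : ∀ t ∈ Icc (0:ℝ) 1, ‖g t‖ ≤ 1) :
    Continuous fun l => ∫ t, Real.exp (l * t) * g t ∂ν := by
  refine continuous_iff_continuousAt.2 fun l₀ => ?_
  refine continuousAt_of_dominated (F := fun l t => Real.exp (l * t) * g t) (x₀ := l₀)
    (bound := fun _ => Real.exp (|l₀|+1)) ?_ ?_ (integrable_const _) ?_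
  · exact Eventually.of_forall fun l =>
      ((Real.continuous_exp.comp (continuous_const.mul continuous_id)).mul hg).aestronglyMeasurable
  · filter_upwards [Metric.ball_mem_nhds l₀ one_pos] with l hl
    filter_upwards [aeIcc h01] with t ht
    have hll : |l| ≤ |l₀| + 1 := by
      have := abs_sub_abs_le_abs_sub l l₀
      have h2 : |l - l₀| < 1 := by simpa [Real.dist_eq] using hl
      linarith
    rw [norm_mul]
    calc ‖Real.exp (l*t)‖ * ‖g t‖ ≤ Real.exp (|l|) * 1 := by
          refine mul_le_mul ?_ (hb t ht) (norm_nonneg _) (Real.exp_pos _).le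
          rw [Real.norm_eq_abs, abs_of_pos (Real.exp_pos _)]
          exact exp_ubd ht
      _ ≤ Real.exp (|l₀|+1) := by rw [mul_one]; exact Real.exp_le_exp.2 hll
  · exact Eventually.of_forall fun t =>
      ((Real.continuous_exp.comp (continuous_id.mul continuous_const)).mul
        continuous_const).continuousAt

lemma Nf_continuous [IsFiniteMeasure ν] (h01 : ν (Set.Icc (0:ℝ) 1)ᶜ = 0) :
    Continuous (Nf ν) :=
  cont_integral h01 continuous_id fun t ht => by
    rw [Real.norm_eq_abs]; exact abs_le.2 ⟨by linarith [ht.1], ht.2⟩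

lemma Zf_continuous [IsFiniteMeasure ν] (h01 : ν (Set.Icc (0:ℝ) 1)ᶜ = 0) :
    Continuous (Zf ν) := by
  have := cont_integral h01 continuous_const (g := fun _ => (1:ℝ)) (fun t _ => by norm_num)
  show Continuous fun l => ∫ t, Real.exp (l * t) ∂ν
  simpa [Zf, mul_one] using this

lemma Nf_zero [IsProbabilityMeasure ν] : Nf ν 0 = Emean ν := by
  simp [Nf, Emean]

set_option maxHeartbeats 1000000 in
/-- The key estimate: for `x` strictly above `emin ν` there is `l ≤ 0` whose tilted mean
is at most `x`. -/
lemma psi_small [IsProbabilityMeasure ν] (h01 : ν (Set.Icc (0:ℝ) 1)ᶜ = 0) {x : ℝ}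
    (hx : emin ν < x) : ∃ l : ℝ, l ≤ 0 ∧ Nf ν l / Zf ν l ≤ x := by
  set m := emin ν with hmdef
  set c' : ℝ := m + (x - m)/3 with hc'
  set c : ℝ := m + 2*(x - m)/3 with hc
  have hm0 : 0 ≤ m := emin_nonneg h01
  have hmc' : m < c' := by rw [hc']; linarith
  have hc'c : c' < c := by rw [hc', hc]; linarith
  have hcx : c < x := by rw [hc]; linarith
  have hc0 : 0 ≤ c := by linarith
  set p : ℝ := (ν (Set.Iic c')).toReal with hp
  have hppos : 0 < p := by
    rw [hp]
    exact ENNReal.toReal_pos (emin_Iic_pos h01 hmc' ⟨1, emin_mem1 h01⟩) (measure_ne_top ν _)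
  -- choose l
  set l : ℝ := min 0 (Real.log (p * (x - c)) / (c - c')) with hl
  refine ⟨l, min_le_left _ _, ?_⟩
  have hl0 : l ≤ 0 := min_le_left _ _
  have hZ := Zf_pos h01 l
  -- N l ≤ c * Z l + exp (l*c)
  have hNle : Nf ν l ≤ c * Zf ν l + Real.exp (l*c) := by
    have hint1 : Integrable (fun t => Real.exp (l*t) * t) ν := by
      refine int_bdd (C := Real.exp |l|)
        (((Real.continuous_exp.comp (continuous_const.mul continuous_id)).mul
          continuous_id).aestronglyMeasurable) ?_
      filter_upwards [aeIcc h01] with t ht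
      rw [norm_mul, Real.norm_eq_abs, Real.norm_eq_abs, abs_of_pos (Real.exp_pos _)]
      have h1 : |t| ≤ 1 := abs_le.2 ⟨by linarith [ht.1], ht.2⟩
      nlinarith [exp_ubd (l := l) ht, Real.exp_pos (l*t), abs_nonneg t]
    have hint2 : Integrable (fun t => c * Real.exp (l*t) + Real.exp (l*c)) ν :=
      ((integrable_exp_tilt h01 l).const_mul c).add (integrable_const _)
    have := integral_mono_ae hint1 hint2 ?_
    · rw [integral_add ((integrable_exp_tilt h01 l).const_mul c) (integrable_const _),
        integral_const_mul, integral_const] at this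
      simp only [probReal_univ, measure_univ, ENNReal.toReal_one, smul_eq_mul, one_mul] at this
      exact this
    · filter_upwards [aeIcc h01] with t ht
      rcases le_total t c with htc | htc
      · have h1 : Real.exp (l*t) * t ≤ Real.exp (l*t) * c :=
          mul_le_mul_of_nonneg_left htc (Real.exp_pos _).le
        have h2 : (0:ℝ) < Real.exp (l*c) := Real.exp_pos _
        nlinarith
      · have h1 : Real.exp (l*t) ≤ Real.exp (l*c) := Real.exp_le_exp.2 (by nlinarith)
        have h2 : Real.exp (l*t) * t ≤ Real.exp (l*t) * 1 :=
          mul_le_mul_of_nonneg_left ht.2 (Real.exp_pos _).le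
        nlinarith [mul_nonneg hc0 (Real.exp_pos (l*t)).le]
  -- Z l ≥ exp(l*c') * p
  have hZge : Real.exp (l*c') * p ≤ Zf ν l := by
    have hind : Integrable (Set.indicator (Set.Iic c') (fun _ => Real.exp (l*c'))) ν :=
      (integrable_const _).indicator measurableSet_Iic
    have := integral_mono_ae hind (integrable_exp_tilt h01 l) ?_
    · rwa [integral_indicator_const _ measurableSet_Iic, smul_eq_mul, mul_comm] at this
    · refine Eventually.of_forall fun t => ?_
      rcases le_or_gt t c' with htc | htc
      · rw [Set.indicator_of_mem (show t ∈ Set.Iic c' from htc)]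
        exact Real.exp_le_exp.2 (by nlinarith)
      · rw [Set.indicator_of_notMem (by simpa using htc)]
        exact (Real.exp_pos _).le
  -- exp (l*(c-c')) ≤ p * (x - c)
  have hxc : 0 < x - c := by linarith
  have hecc : Real.exp (l*(c-c')) ≤ p * (x - c) := by
    have h1 : l ≤ Real.log (p * (x - c)) / (c - c') := min_le_right _ _
    have h2 : l * (c - c') ≤ Real.log (p * (x - c)) :=
      (le_div_iff₀ (by linarith)).1 h1
    calc Real.exp (l*(c-c')) ≤ Real.exp (Real.log (p * (x-c))) := Real.exp_le_exp.2 h2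
      _ = p * (x - c) := Real.exp_log (by positivity)
  -- conclude
  rw [div_le_iff₀ hZ]
  set r : ℝ := Real.exp (l*(c-c')) / p with hr
  have hr0 : 0 ≤ r := by positivity
  have hrp : r * p = Real.exp (l*(c-c')) := div_mul_cancel₀ _ hppos.ne'
  have hexp : Real.exp (l*(c-c')) * Real.exp (l*c') = Real.exp (l*c) := by
    rw [← Real.exp_add]; ring_nf
  have key : 0 ≤ r * (Zf ν l - Real.exp (l*c') * p) := mul_nonneg hr0 (by linarith)
  have h2 : r * (Real.exp (l*c') * p) = Real.exp (l*c) := by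
    calc r * (Real.exp (l*c') * p) = Real.exp (l*c') * (r * p) := by ring
      _ = Real.exp (l*c') * Real.exp (l*(c-c')) := by rw [hrp]
      _ = Real.exp (l*c) := by rw [mul_comm]; exact hexp
  have hrZ : Real.exp (l*c) ≤ r * Zf ν l := by nlinarith [key, h2]
  have hrx : r ≤ x - c := by
    rw [hr, div_le_iff₀ hppos]
    calc Real.exp (l*(c-c')) ≤ p * (x-c) := hecc
      _ = (x - c) * p := by ring
  have : Nf ν l ≤ c * Zf ν l + r * Zf ν l := by linarith
  calc Nf ν l ≤ (c + r) * Zf ν l := by nlinarith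
    _ ≤ x * Zf ν l := by nlinarith

end Psi
section Constructions

variable {ν : Measure ℝ} [IsProbabilityMeasure ν]

/-- The conditional measure on an atom `{m}`. -/
lemma atom_facts (h01 : ν (Set.Icc (0:ℝ) 1)ᶜ = 0) {m : ℝ} (hatom : ν {m} ≠ 0) :
    ∃ ζ : Measure ℝ, ζ ∈ Pcc ∧ Emean ζ = m ∧
      KL ζ ν = ENNReal.ofReal (- Real.log ((ν {m}).toReal)) := by
  have hne0 : (ν {m}).toReal ≠ 0 := ENNReal.toReal_ne_zero.2 ⟨hatom, measure_ne_top _ _⟩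
  set c : ℝ := ((ν {m}).toReal)⁻¹ with hc
  set ρ : ℝ → ℝ := Set.indicator {m} (fun _ => c) with hρ
  have hmeas : Measurable ρ := measurable_const.indicator (measurableSet_singleton m)
  have hρ0 : ∀ t, 0 ≤ ρ t := fun t => Set.indicator_nonneg (fun _ _ => by positivity) t
  have hint : Integrable ρ ν := (integrable_const c).indicator (measurableSet_singleton m)
  have hmass : ∫ t, ρ t ∂ν = 1 := by
    rw [hρ, integral_indicator_const c (measurableSet_singleton m), smul_eq_mul, measureReal_def, hc,
      mul_inv_cancel₀ hne0]
  set ζ : Measure ℝ := ν.withDensity (fun t => ENNReal.ofReal (ρ t)) with hζ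
  haveI hprob : IsProbabilityMeasure ζ := tilt_isProb hρ0 hint hmass
  have hnull : ζ (Set.Icc (0:ℝ) 1)ᶜ = 0 := tilt_null_compl h01
  have hζm : ζ {m}ᶜ = 0 := by
    rw [hζ, withDensity_apply _ (measurableSet_singleton m).compl]
    rw [setLIntegral_congr_fun (measurableSet_singleton m).compl
      ((fun t ht => by
        rw [hρ, Set.indicator_of_notMem ht, ENNReal.ofReal_zero] : ∀ t ∈ ({m}ᶜ : Set ℝ),
          ENNReal.ofReal (ρ t) = (0:ℝ≥0∞)))]
    simp
  have haem : ∀ᵐ t ∂ζ, t = m := by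
    refine ae_iff.2 ?_
    have : {t : ℝ | ¬ t = m} = ({m}ᶜ : Set ℝ) := by ext t; simp
    rw [this]; exact hζm
  have hE : Emean ζ = m := by
    have : Emean ζ = ∫ _t, m ∂ζ := integral_congr_ae (by filter_upwards [haem] with t ht using ht)
    rw [this, integral_const]
    simp
  have hlog : (fun t => Real.log (ρ t)) =ᵐ[ζ] (fun _ => Real.log c) := by
    filter_upwards [haem] with t ht
    rw [ht, hρ]
    simp
  have hli : Integrable (fun t => Real.log (ρ t)) ζ :=
    (integrable_const (Real.log c)).congr hlog.symm
  refine ⟨ζ, ⟨hprob, hnull⟩, hE, ?_⟩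
  rw [hζ, tilt_KL hmeas hρ0 (by rw [← hζ]; exact hli), ← hζ, integral_congr_ae hlog,
    integral_const]
  simp [hc, Real.log_inv]

/-- The exponentially tilted measure. -/
lemma tilt_exp_facts (h01 : ν (Set.Icc (0:ℝ) 1)ᶜ = 0) (l : ℝ) :
    ∃ ζ : Measure ℝ, ζ ∈ Pcc ∧ Emean ζ = Nf ν l / Zf ν l ∧
      KL ζ ν = ENNReal.ofReal (l * (Nf ν l / Zf ν l) - Real.log (Zf ν l)) := by
  have hZ : 0 < Zf ν l := Zf_pos h01 l
  set ρ : ℝ → ℝ := fun t => Real.exp (l*t) / Zf ν l with hρ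
  have hmeas : Measurable ρ :=
    ((Real.continuous_exp.comp (continuous_const.mul continuous_id)).div_const _).measurable
  have hρ0 : ∀ t, 0 ≤ ρ t := fun t => by positivity
  have hint : Integrable ρ ν := (integrable_exp_tilt h01 l).div_const _
  have hmass : ∫ t, ρ t ∂ν = 1 := by
    rw [hρ]
    rw [integral_div]
    exact div_self hZ.ne'
  set ζ : Measure ℝ := ν.withDensity (fun t => ENNReal.ofReal (ρ t)) with hζ
  haveI hprob : IsProbabilityMeasure ζ := tilt_isProb hρ0 hint hmass
  have hnull : ζ (Set.Icc (0:ℝ) 1)ᶜ = 0 := tilt_null_compl h01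
  have hE : Emean ζ = Nf ν l / Zf ν l := by
    have h1 : Emean ζ = ∫ t, ρ t * t ∂ν := tilt_integral hmeas hρ0 (fun t => t)
    rw [h1, hρ]
    have : (fun t => Real.exp (l*t) / Zf ν l * t) = fun t => (Real.exp (l*t) * t) / Zf ν l := by
      ext t; ring
    rw [this, integral_div]
    rfl
  have hlogρ : (fun t => Real.log (ρ t)) = fun t => l * t - Real.log (Zf ν l) := by
    ext t
    rw [hρ, Real.log_div (Real.exp_ne_zero _) hZ.ne', Real.log_exp]
  have hli : Integrable (fun t => Real.log (ρ t)) ζ := by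
    rw [hlogρ]
    exact ((integrable_id_cc hnull).const_mul l).sub (integrable_const _)
  refine ⟨ζ, ⟨hprob, hnull⟩, hE, ?_⟩
  rw [hζ, tilt_KL hmeas hρ0 (by rw [← hζ]; exact hli), ← hζ]
  congr 1
  rw [hlogρ, integral_sub ((integrable_id_cc hnull).const_mul l) (integrable_const _),
    integral_const_mul, integral_const]
  have : ∫ t, t ∂ζ = Emean ζ := rfl
  rw [this, hE]
  simp

end Constructions
section LeHalf

open scoped Topology

variable {ν : Measure ℝ} [IsProbabilityMeasure ν]

lemma Linfle_top (h01 : ν (Set.Icc (0:ℝ) 1)ᶜ = 0) {x : ℝ}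
    (hgt : ∀ ζ : Measure ℝ, IsProbabilityMeasure ζ → ζ (Set.Icc (0:ℝ) 1)ᶜ = 0 → ζ ≪ ν →
      x < Emean ζ) : Linfle Pcc x ν = ⊤ := by
  rw [Linfle]
  refine le_antisymm le_top (le_iInf fun ζ => le_iInf fun hζ => ?_)
  obtain ⟨⟨hprob, h01ζ⟩, hle⟩ := hζ
  rw [KL, if_neg]
  rintro ⟨hac, -⟩
  exact absurd hle (not_le.2 (hgt ζ hprob h01ζ hac))

lemma log_Zf_le (h01 : ν (Set.Icc (0:ℝ) 1)ᶜ = 0) {l : ℝ} (hl : l ≤ 0) :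
    Real.log (Zf ν l) ≤ l * emin ν := by
  refine (Real.log_le_iff_le_exp (Zf_pos h01 l)).2 ?_
  have := integral_mono_ae (integrable_exp_tilt h01 l)
    (integrable_const (Real.exp (l * emin ν))) ?_
  · rw [integral_const] at this
    simpa [Zf] using this
  · filter_upwards [emin_ae_le h01] with t ht
    exact Real.exp_le_exp.2 (by nlinarith)

lemma phiStar_top_lt (h01 : ν (Set.Icc (0:ℝ) 1)ᶜ = 0) {x : ℝ} (hxm : x < emin ν) :
    phiStar ν x = ⊤ := by
  rw [phiStar_eq h01 x]
  refine iSup_coe_eq_top fun M => ?_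
  set m := emin ν with hm
  refine ⟨min 0 (M / (x - m)), ?_⟩
  set l := min 0 (M / (x - m)) with hldef
  have hl0 : l ≤ 0 := min_le_left _ _
  have hlogZ : Real.log (Zf ν l) ≤ l * m := log_Zf_le h01 hl0
  have hlxm : M ≤ l * (x - m) := by
    rcases le_or_gt M 0 with hM | hM
    · have : 0 ≤ l * (x - m) := by nlinarith
      linarith
    · have hdiv : M / (x - m) < 0 := div_neg_of_pos_of_neg hM (by linarith)
      have : l = M / (x - m) := min_eq_right hdiv.le
      rw [this, div_mul_cancel₀ _ (show x - m ≠ 0 by intro h; rw [sub_eq_zero] at h; linarith)]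
  have hring : l * (x - m) = l * x - l * m := by ring
  linarith

lemma term_eq_neg_log_W (h01 : ν (Set.Icc (0:ℝ) 1)ᶜ = 0) (m l : ℝ) :
    l * m - Real.log (Zf ν l) = - Real.log (Wf ν m l) := by
  rw [Zf_eq_Wf m l, Real.log_mul (Real.exp_ne_zero _) (Wf_pos h01 m l).ne', Real.log_exp]
  ring

/-- The missing-mass case: no atom at `emin ν` makes `φ*(emin ν) = ⊤`. -/
lemma phiStar_top_atomless (h01 : ν (Set.Icc (0:ℝ) 1)ᶜ = 0)
    (hatom : ν {emin ν} = 0) : phiStar ν (emin ν) = ⊤ := by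
  set m := emin ν with hm
  have hW : Tendsto (fun l => Wf ν m l) atBot (𝓝[>] (0:ℝ)) := by
    refine tendsto_nhdsWithin_iff.2 ⟨?_, Eventually.of_forall fun l => Wf_pos h01 m l⟩
    have := Wf_tendsto (ν := ν) (m := m) (emin_ae_le h01)
    rwa [hatom, ENNReal.toReal_zero] at this
  have hlog : Tendsto (fun l => Real.log (Wf ν m l)) atBot atBot :=
    Real.tendsto_log_nhdsGT_zero.comp hW
  have hneg : Tendsto (fun l => - Real.log (Wf ν m l)) atBot atTop :=
    tendsto_neg_atTop_iff.2 hlog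
  rw [phiStar_eq h01 m]
  refine iSup_coe_eq_top fun M => ?_
  obtain ⟨l, hl⟩ := (tendsto_atTop.1 hneg M).exists
  exact ⟨l, by rw [term_eq_neg_log_W h01 m l]; exact hl⟩

/-- The atom case: `φ*(emin ν) ≥ -log ν{emin ν}`. -/
lemma phiStar_ge_atom (h01 : ν (Set.Icc (0:ℝ) 1)ᶜ = 0) (hatom : ν {emin ν} ≠ 0) :
    ((- Real.log ((ν {emin ν}).toReal) : ℝ) : EReal) ≤ phiStar ν (emin ν) := by
  set m := emin ν with hm
  have hJ : 0 < (ν {m}).toReal := ENNReal.toReal_pos hatom (measure_ne_top _ _)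
  have htendW : Tendsto (fun l => Wf ν m l) atBot (𝓝 ((ν {m}).toReal)) :=
    Wf_tendsto (emin_ae_le h01)
  have htend : Tendsto (fun l => l * m - Real.log (Zf ν l)) atBot
      (𝓝 (- Real.log ((ν {m}).toReal))) := by
    have h1 : Tendsto (fun l => Real.log (Wf ν m l)) atBot (𝓝 (Real.log ((ν {m}).toReal))) :=
      (Real.continuousAt_log hJ.ne').tendsto.comp htendW
    have h2 := h1.neg
    refine h2.congr fun l => ?_
    rw [term_eq_neg_log_W h01 m l]
  rw [phiStar_eq h01 m]
  exact le_iSup_of_tendsto_atBot htend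

set_option maxHeartbeats 1000000 in
/-- The `x ≤ E(ν)` half of the duality. -/
lemma le_half (ν : Measure ℝ) (hp : IsProbabilityMeasure ν)
    (h01 : ν (Set.Icc (0:ℝ) 1)ᶜ = 0) {x : ℝ} (hx : x ≤ Emean ν) :
    phiStar ν x = ((Linfle Pcc x ν : ℝ≥0∞) : EReal) := by
  -- part A, packaged
  have hA : ∀ ζ ∈ {ζ ∈ Pcc | Emean ζ ≤ x}, phiStar ν x ≤ (KL ζ ν : EReal) := by
    rintro ζ ⟨⟨hprob, h01ζ⟩, hle⟩
    exact phiStar_le_KL (ζ := ζ) h01 h01ζ hle hx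
  -- the generic "attained" packaging
  have pack : ∀ v : ℝ≥0∞, ∀ ζ₀ ∈ {ζ ∈ Pcc | Emean ζ ≤ x}, KL ζ₀ ν = v →
      ((v : ℝ≥0∞) : EReal) ≤ phiStar ν x → phiStar ν x = ((Linfle Pcc x ν : ℝ≥0∞) : EReal) := by
    intro v ζ₀ hmem hKLv hvle
    have hphi : phiStar ν x = (v : EReal) := le_antisymm (hKLv ▸ hA ζ₀ hmem) hvle
    have hinf : Linfle Pcc x ν = v := by
      refine le_antisymm ?_ (le_iInf fun ζ => le_iInf fun hζ => ?_)
      · have h2 : Linfle Pcc x ν ≤ KL ζ₀ ν := biInf_le _ hmem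
        rwa [hKLv] at h2
      · have := hA ζ hζ
        rw [hphi] at this
        exact EReal.coe_ennreal_le_coe_ennreal_iff.1 this
    rw [hphi, hinf]
  rcases lt_trichotomy x (emin ν) with hlt | heq | hgt
  · -- x < emin : both sides are ⊤
    rw [phiStar_top_lt h01 hlt, Linfle_top h01
      (fun ζ hprob h01ζ hac => lt_of_lt_of_le hlt (emin_le_Emean h01 h01ζ hac)),
      EReal.coe_ennreal_top]
  · rcases eq_or_ne (ν {emin ν}) 0 with hatom | hatom
    · -- x = emin, no atom: both sides ⊤
      subst heq
      rw [phiStar_top_atomless h01 hatom, Linfle_top h01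
        (fun ζ hprob h01ζ hac => emin_lt_Emean h01 h01ζ hac hatom), EReal.coe_ennreal_top]
    · -- x = emin, atom
      obtain ⟨ζ₀, hPcc, hE, hKL⟩ := atom_facts h01 hatom
      set J : ℝ := - Real.log ((ν {emin ν}).toReal) with hJdef
      have hJ0 : 0 ≤ J := by
        rw [hJdef, neg_nonneg]
        refine Real.log_nonpos ENNReal.toReal_nonneg ?_
        rw [show (1:ℝ) = (ν Set.univ).toReal by simp]
        exact ENNReal.toReal_mono (measure_ne_top _ _) (measure_mono (subset_univ _))
      refine pack (ENNReal.ofReal J) ζ₀ ⟨hPcc, le_of_eq (hE.trans heq.symm)⟩ hKL ?_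
      have hcoe : ((ENNReal.ofReal J : ℝ≥0∞) : EReal) = ((J : ℝ) : EReal) := by
        rw [EReal.coe_ennreal_ofReal, max_eq_left hJ0]
      rw [hcoe, heq]
      exact phiStar_ge_atom h01 hatom
  · -- emin < x ≤ Emean: exponential tilting
    obtain ⟨l₁, hl₁0, hψl₁⟩ := psi_small h01 hgt
    have hcont : ContinuousOn (fun l => Nf ν l / Zf ν l) (Icc l₁ 0) :=
      ((Nf_continuous h01).div (Zf_continuous h01) fun l => (Zf_pos h01 l).ne').continuousOn
    have hψ0 : Nf ν 0 / Zf ν 0 = Emean ν := by rw [Nf_zero, Zf_zero, div_one]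
    have hximg : x ∈ Icc (Nf ν l₁ / Zf ν l₁) (Nf ν 0 / Zf ν 0) := ⟨hψl₁, by rw [hψ0]; exact hx⟩
    obtain ⟨l₀, _, hψl₀⟩ := intermediate_value_Icc hl₁0 hcont hximg
    have hψl₀' : Nf ν l₀ / Zf ν l₀ = x := hψl₀
    obtain ⟨ζ₀, hPcc, hE, hKL⟩ := tilt_exp_facts h01 l₀
    rw [hψl₀'] at hE hKL
    set e : ℝ := l₀ * x - Real.log (Zf ν l₀) with hedef
    refine pack (ENNReal.ofReal e) ζ₀ ⟨hPcc, le_of_eq hE⟩ hKL ?_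
    have hterm : ∀ l : ℝ, (((l * x - Real.log (Zf ν l)) : ℝ) : EReal) ≤ phiStar ν x := by
      intro l
      rw [phiStar_eq h01 x]
      exact le_iSup (fun l : ℝ => (((l * x - Real.log (Zf ν l)) : ℝ) : EReal)) l
    rcases le_or_gt e 0 with he | he
    · rw [ENNReal.ofReal_of_nonpos he]
      have h0 := hterm 0
      rw [show ((0:ℝ) * x - Real.log (Zf ν 0)) = 0 by rw [Zf_zero]; simp] at h0
      simpa using h0
    · rw [EReal.coe_ennreal_ofReal, max_eq_left he.le]
      exact hterm l₀

end LeHalf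
section Reflect

/-- The reflection `t ↦ 1 - t`. -/
def rf : ℝ → ℝ := fun t => 1 - t

lemma rf_cont : Continuous rf := continuous_const.sub continuous_id

lemma rf_meas_emb : MeasurableEmbedding rf :=
  Homeomorph.measurableEmbedding
    { toFun := rf
      invFun := rf
      left_inv := fun t => by simp [rf]
      right_inv := fun t => by simp [rf]
      continuous_toFun := rf_cont
      continuous_invFun := rf_cont }

lemma rf_meas : Measurable rf := rf_cont.measurable

lemma rf_map_map (μ : Measure ℝ) : (μ.map rf).map rf = μ := by
  rw [Measure.map_map rf_meas rf_meas]
  have : rf ∘ rf = id := by ext t; simp [rf]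
  rw [this, Measure.map_id]

lemma rf_preimage_Icc : rf ⁻¹' (Set.Icc (0:ℝ) 1) = Set.Icc (0:ℝ) 1 := by
  ext t
  simp only [mem_preimage, mem_Icc, rf]
  constructor <;> rintro ⟨h1, h2⟩ <;> constructor <;> linarith

lemma rf_mem_Pcc {ζ : Measure ℝ} (h : ζ ∈ Pcc) : ζ.map rf ∈ Pcc := by
  obtain ⟨hprob, h01⟩ := h
  refine ⟨Measure.isProbabilityMeasure_map rf_meas.aemeasurable, ?_⟩
  rw [Measure.map_apply rf_meas measurableSet_Icc.compl, preimage_compl, rf_preimage_Icc]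
  exact h01

lemma rf_Emean {ζ : Measure ℝ} (h : ζ ∈ Pcc) : Emean (ζ.map rf) = 1 - Emean ζ := by
  haveI := h.1
  have h1 : Emean (ζ.map rf) = ∫ t, rf t ∂ζ :=
    integral_map rf_meas.aemeasurable aestronglyMeasurable_id
  rw [h1, Emean]
  have : ∀ t, rf t = 1 - t := fun t => rfl
  rw [show (fun t => rf t) = fun t : ℝ => 1 - t from rfl,
    integral_sub (integrable_const 1) (integrable_id_cc h.2), integral_const]
  simp

lemma rf_KL {ζ ν : Measure ℝ} [IsProbabilityMeasure ζ] [IsProbabilityMeasure ν] :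
    KL (ζ.map rf) (ν.map rf) = KL ζ ν := by
  haveI : IsProbabilityMeasure (ζ.map rf) := Measure.isProbabilityMeasure_map rf_meas.aemeasurable
  haveI : IsProbabilityMeasure (ν.map rf) := Measure.isProbabilityMeasure_map rf_meas.aemeasurable
  by_cases hac : ζ ≪ ν
  · have hmapac : ζ.map rf ≪ ν.map rf := rf_meas_emb.absolutelyContinuous_map hac
    have hrn := rf_meas_emb.rnDeriv_map ζ ν
    have hlog : (fun x => Real.log (((ζ.map rf).rnDeriv (ν.map rf) (rf x)).toReal)) =ᵐ[ζ]
        (fun x => Real.log ((ζ.rnDeriv ν x).toReal)) := by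
      refine (Measure.ae_le_iff_absolutelyContinuous.2 hac) ?_
      filter_upwards [hrn] with t ht
      rw [ht]
    have hintiff : Integrable (fun y => Real.log (((ζ.map rf).rnDeriv (ν.map rf) y).toReal))
        (ζ.map rf) ↔ Integrable (fun x => Real.log ((ζ.rnDeriv ν x).toReal)) ζ := by
      rw [rf_meas_emb.integrable_map_iff]
      exact integrable_congr hlog
    rw [KL, KL]
    by_cases hint : Integrable (fun x => Real.log ((ζ.rnDeriv ν x).toReal)) ζ
    · rw [if_pos ⟨hmapac, hintiff.2 hint⟩, if_pos ⟨hac, hint⟩]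
      congr 1
      rw [rf_meas_emb.integral_map]
      exact integral_congr_ae hlog
    · rw [if_neg (fun h => hint (hintiff.1 h.2)), if_neg (fun h => hint h.2)]
  · have hmapac : ¬ ζ.map rf ≪ ν.map rf := by
      intro h
      have := rf_meas_emb.absolutelyContinuous_map h
      rw [rf_map_map, rf_map_map] at this
      exact hac this
    rw [KL, KL, if_neg (fun h => hmapac h.1), if_neg (fun h => hac h.1)]

lemma rf_phiStar {ν : Measure ℝ} [IsProbabilityMeasure ν] (h01 : ν (Set.Icc (0:ℝ) 1)ᶜ = 0)
    (x : ℝ) : phiStar (ν.map rf) (1 - x) = phiStar ν x := by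
  haveI : IsProbabilityMeasure (ν.map rf) := Measure.isProbabilityMeasure_map rf_meas.aemeasurable
  have h01' : (ν.map rf) (Set.Icc (0:ℝ) 1)ᶜ = 0 := (rf_mem_Pcc ⟨‹_›, h01⟩).2
  rw [phiStar_eq h01' (1-x), phiStar_eq h01 x]
  have hZ : ∀ l : ℝ, Zf (ν.map rf) l = Real.exp l * Zf ν (-l) := by
    intro l
    rw [Zf, integral_map rf_meas.aemeasurable
      (show AEStronglyMeasurable (fun t : ℝ => Real.exp (l * t)) (ν.map rf) from
        (Real.continuous_exp.comp (continuous_const.mul continuous_id)).aestronglyMeasurable)]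
    rw [Zf, ← integral_const_mul]
    congr 1
    ext t
    rw [← Real.exp_add]
    congr 1
    simp [rf]
    ring
  have hterm : ∀ l : ℝ, l * (1-x) - Real.log (Zf (ν.map rf) l)
      = (-l) * x - Real.log (Zf ν (-l)) := by
    intro l
    rw [hZ l, Real.log_mul (Real.exp_ne_zero _) (Zf_pos h01 (-l)).ne', Real.log_exp]
    ring
  apply le_antisymm
  · refine iSup_le fun l => ?_
    rw [show (((l * (1-x) - Real.log (Zf (ν.map rf) l)) : ℝ) : EReal)
        = (((-l) * x - Real.log (Zf ν (-l)) : ℝ) : EReal) by rw [hterm l]]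
    exact le_iSup (fun l' : ℝ => (((l' * x - Real.log (Zf ν l')) : ℝ) : EReal)) (-l)
  · refine iSup_le fun l => ?_
    have h2 := hterm (-l)
    rw [neg_neg] at h2
    rw [show (((l * x - Real.log (Zf ν l)) : ℝ) : EReal)
        = ((((-l) * (1-x) - Real.log (Zf (ν.map rf) (-l))) : ℝ) : EReal) by rw [h2]]
    exact le_iSup (fun l' : ℝ => (((l' * (1-x) - Real.log (Zf (ν.map rf) l')) : ℝ) : EReal)) (-l)

lemma rf_Linfge {ν : Measure ℝ} (hν : ν ∈ Pcc) (x : ℝ) :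
    Linfge Pcc x ν = Linfle Pcc (1-x) (ν.map rf) := by
  haveI := hν.1
  haveI : IsProbabilityMeasure (ν.map rf) := Measure.isProbabilityMeasure_map rf_meas.aemeasurable
  apply le_antisymm
  · refine le_iInf fun ξ => le_iInf fun hξ => ?_
    obtain ⟨hξP, hle⟩ := hξ
    haveI := hξP.1
    have hζP := rf_mem_Pcc hξP
    have hE : Emean (ξ.map rf) = 1 - Emean ξ := rf_Emean hξP
    have hKL : KL (ξ.map rf) ν = KL ξ (ν.map rf) := by
      conv_lhs => rw [show ν = (ν.map rf).map rf from (rf_map_map ν).symm]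
      exact rf_KL
    calc Linfge Pcc x ν ≤ KL (ξ.map rf) ν := biInf_le _ ⟨hζP, by rw [hE]; linarith⟩
      _ = KL ξ (ν.map rf) := hKL
  · refine le_iInf fun ζ => le_iInf fun hζ => ?_
    obtain ⟨hζP, hge⟩ := hζ
    haveI := hζP.1
    have hξP := rf_mem_Pcc hζP
    have hE : Emean (ζ.map rf) = 1 - Emean ζ := rf_Emean hζP
    have hKL : KL (ζ.map rf) (ν.map rf) = KL ζ ν := rf_KL
    calc Linfle Pcc (1-x) (ν.map rf) ≤ KL (ζ.map rf) (ν.map rf) :=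
          biInf_le _ ⟨hξP, by rw [hE]; linarith⟩
      _ = KL ζ ν := hKL

end Reflect
/-- Duality for the model `P[0,1]`: for every `ν ∈ P[0,1]`,
`φ*_ν(x) = Linf≤(x,ν)` for all `x ≤ E(ν)` and `φ*_ν(x) = Linf≥(x,ν)` for all `x ≥ E(ν)`,
both sides taking values in `[0, +∞]`. -/
theorem phiStar_eq_Linf_Pcc (ν : Measure ℝ) (hν : ν ∈ Pcc) :
    (∀ x : ℝ, x ≤ Emean ν → phiStar ν x = (Linfle Pcc x ν : EReal)) ∧
    (∀ x : ℝ, Emean ν ≤ x → phiStar ν x = (Linfge Pcc x ν : EReal)) := by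
  haveI := hν.1
  constructor
  · intro x hx
    exact le_half ν hν.1 hν.2 hx
  · intro x hx
    haveI : IsProbabilityMeasure (ν.map rf) := Measure.isProbabilityMeasure_map rf_meas.aemeasurable
    have hνP' := rf_mem_Pcc hν
    have hE : Emean (ν.map rf) = 1 - Emean ν := rf_Emean hν
    have h2 : 1 - x ≤ Emean (ν.map rf) := by rw [hE]; linarith
    rw [← rf_phiStar hν.2 x, le_half (ν.map rf) hνP'.1 hνP'.2 h2, ← rf_Linfge hν x]

end
end

section
/- Let D be any set of probability measures on ℝ with finite first moments and let ν ∈ D. Then φ*_ν(x) ≤ Linf≤(x,ν) for all x ≤ E(ν), and φ*_ν(x) ≤ Linf≥(x,ν) for all x ≥ E(ν). -/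
open MeasureTheory Filter Set ProbabilityTheory
open scoped ENNReal NNReal

noncomputable section

lemma gibbs_nonneg {μ ρ : Measure ℝ} [IsProbabilityMeasure μ] [IsProbabilityMeasure ρ]
    (hμρ : μ ≪ ρ) (h_int : Integrable (llr μ ρ) μ) :
    0 ≤ ∫ x, llr μ ρ x ∂μ := by
  rw [← integral_rnDeriv_smul hμρ]
  have hg : Integrable (fun x ↦ (μ.rnDeriv ρ x).toReal • llr μ ρ x) ρ :=
    (integrable_rnDeriv_smul_iff hμρ).2 h_int
  have hg1 : Integrable (fun x ↦ (μ.rnDeriv ρ x).toReal - 1) ρ :=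
    Measure.integrable_toReal_rnDeriv.sub (integrable_const 1)
  have hmono : (fun x ↦ (μ.rnDeriv ρ x).toReal - 1) ≤
      fun x ↦ (μ.rnDeriv ρ x).toReal • llr μ ρ x := by
    intro y
    simp only []
    show (μ.rnDeriv ρ y).toReal - 1 ≤ (μ.rnDeriv ρ y).toReal • llr μ ρ y
    set t := (μ.rnDeriv ρ y).toReal with ht
    have ht0 : 0 ≤ t := ENNReal.toReal_nonneg
    have hll : llr μ ρ y = Real.log t := rfl
    rw [hll, smul_eq_mul]
    rcases eq_or_lt_of_le ht0 with h | h
    · simp [← h]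
    · have h1 := Real.log_le_sub_one_of_pos (inv_pos.2 h)
      rw [Real.log_inv] at h1
      have h2 : t * t⁻¹ = 1 := mul_inv_cancel₀ h.ne'
      nlinarith [mul_le_mul_of_nonneg_left h1 ht0]
  have hint := integral_mono hg1 hg hmono
  have hE : ∫ x, ((μ.rnDeriv ρ x).toReal - 1) ∂ρ = 0 := by
    rw [integral_sub Measure.integrable_toReal_rnDeriv (integrable_const 1),
      Measure.integral_toReal_rnDeriv hμρ]
    simp
  linarith

lemma dv_ineq {μ ν : Measure ℝ} [IsProbabilityMeasure μ] [IsProbabilityMeasure ν]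
    {f : ℝ → ℝ} (hμν : μ ≪ ν) (hfμ : Integrable f μ)
    (hfν : Integrable (fun x ↦ Real.exp (f x)) ν) (h_int : Integrable (llr μ ν) μ) :
    ∫ x, f x ∂μ - Real.log (∫ x, Real.exp (f x) ∂ν) ≤ ∫ x, llr μ ν x ∂μ := by
  haveI : IsProbabilityMeasure (ν.tilted f) := isProbabilityMeasure_tilted hfν
  have hμρ : μ ≪ ν.tilted f := hμν.trans (absolutelyContinuous_tilted hfν)
  have h1 : Integrable (llr μ (ν.tilted f)) μ :=
    integrable_llr_tilted_right hμν hfμ h_int hfν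
  have h2 := integral_llr_tilted_right hμν hfμ hfν h_int
  have h0 := gibbs_nonneg hμρ h1
  rw [h2] at h0
  linarith

lemma key_ineq {ζ ν : Measure ℝ} [IsProbabilityMeasure ζ] [IsProbabilityMeasure ν]
    (hζν : ζ ≪ ν) (hζ1 : Integrable (fun x => x) ζ) (hν1 : Integrable (fun x => x) ν)
    (h_int : Integrable (llr ζ ν) ζ) {l x : ℝ}
    (hfν : Integrable (fun y => Real.exp (l * y)) ν)
    (hlx : l * x ≤ l * Emean ζ ∨ l * x ≤ l * Emean ν) :
    l * x - Real.log (∫ y, Real.exp (l * y) ∂ν) ≤ ∫ y, llr ζ ν y ∂ζ := by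
  rcases hlx with h | h
  · have hdv := dv_ineq hζν (hζ1.const_mul l) hfν h_int
    have hE : ∫ y, l * y ∂ζ = l * Emean ζ := by
      rw [integral_const_mul]; rfl
    rw [hE] at hdv
    linarith
  · have hint0 : Integrable (llr ν ν) ν := by
      refine (integrable_const (0 : ℝ)).congr ?_
      filter_upwards [Measure.rnDeriv_self ν] with y hy
      simp [llr, hy]
    have hz : ∫ y, llr ν ν y ∂ν = 0 := by
      rw [integral_congr_ae (g := fun _ => (0:ℝ)) ?_, integral_zero]
      filter_upwards [Measure.rnDeriv_self ν] with y hy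
      simp [llr, hy]
    have hdv := dv_ineq (Measure.AbsolutelyContinuous.refl ν) (hν1.const_mul l) hfν hint0
    have hE : ∫ y, l * y ∂ν = l * Emean ν := by
      rw [integral_const_mul]; rfl
    rw [hE, hz] at hdv
    have hg := gibbs_nonneg hζν h_int
    linarith

lemma main_aux (D : Set (Measure ℝ))
    (hD : ∀ ζ ∈ D, IsProbabilityMeasure ζ ∧ Integrable (fun x => x) ζ)
    (ν : Measure ℝ) (hν : ν ∈ D) (x l : ℝ) (S : Set (Measure ℝ))
    (hS : ∀ ζ ∈ S, ζ ∈ D ∧ (l * x ≤ l * Emean ζ ∨ l * x ≤ l * Emean ν)) :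
    ((l * x : ℝ) : EReal) - logMgf ν l ≤ ((⨅ ζ ∈ S, KL ζ ν : ℝ≥0∞) : EReal) := by
  haveI := (hD ν hν).1
  by_cases hfν : Integrable (fun y => Real.exp (l * y)) ν
  · have hI : 0 < ∫ y, Real.exp (l * y) ∂ν := integral_exp_pos hfν
    have hlog : logMgf ν l = ((Real.log (∫ y, Real.exp (l * y) ∂ν) : ℝ) : EReal) := by
      rw [logMgf, ← ofReal_integral_eq_lintegral_ofReal hfν
        (Filter.Eventually.of_forall fun y => (Real.exp_pos _).le),
        ENNReal.log_ofReal_of_pos hI]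
    rw [hlog, ← EReal.coe_sub]
    set r := l * x - Real.log (∫ y, Real.exp (l * y) ∂ν) with hr
    have h1 : ENNReal.ofReal r ≤ ⨅ ζ ∈ S, KL ζ ν := by
      refine le_iInf₂ fun ζ hζ => ?_
      obtain ⟨hζD, hlx⟩ := hS ζ hζ
      haveI := (hD ζ hζD).1
      rw [KL]
      split_ifs with h
      · exact ENNReal.ofReal_le_ofReal (key_ineq h.1 (hD ζ hζD).2 (hD ν hν).2 h.2 hfν hlx)
      · exact le_top
    calc ((r : ℝ) : EReal) ≤ ((ENNReal.ofReal r : ℝ≥0∞) : EReal) := by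
          rw [EReal.coe_ennreal_ofReal]; exact_mod_cast le_max_left _ _
      _ ≤ _ := EReal.coe_ennreal_le_coe_ennreal_iff.2 h1
  · have htop : (∫⁻ y, ENNReal.ofReal (Real.exp (l * y)) ∂ν) = ⊤ := by
      by_contra h
      apply hfν
      refine ⟨(Real.continuous_exp.comp
        (continuous_const.mul continuous_id)).aestronglyMeasurable, ?_⟩
      rw [hasFiniteIntegral_iff_ofReal (Filter.Eventually.of_forall fun y => (Real.exp_pos _).le)]
      exact lt_top_iff_ne_top.2 h
    rw [logMgf, htop, ENNReal.log_top, EReal.sub_top]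
    exact bot_le

/-- For any model `D` of probability measures on ℝ with finite first moments and any `ν ∈ D`:
`φ*_ν(x) ≤ Linf≤(x,ν)` for all `x ≤ E(ν)`, and `φ*_ν(x) ≤ Linf≥(x,ν)` for all `x ≥ E(ν)`. -/
theorem phiStar_le_Linf (D : Set (Measure ℝ))
    (hD : ∀ ζ ∈ D, IsProbabilityMeasure ζ ∧ Integrable (fun x => x) ζ)
    (ν : Measure ℝ) (hν : ν ∈ D) :
    (∀ x : ℝ, x ≤ Emean ν → phiStar ν x ≤ (Linfle D x ν : EReal)) ∧
    (∀ x : ℝ, Emean ν ≤ x → phiStar ν x ≤ (Linfge D x ν : EReal)) := by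
  constructor
  · intro x hx
    rw [Linfle, phiStar]
    refine iSup_le fun l => ?_
    refine main_aux D hD ν hν x l _ fun ζ hζ => ⟨hζ.1, ?_⟩
    rcases le_total l 0 with hl | hl
    · exact Or.inl (by nlinarith [hζ.2])
    · exact Or.inr (by nlinarith)
  · intro x hx
    rw [Linfge, phiStar]
    refine iSup_le fun l => ?_
    refine main_aux D hD ν hν x l _ fun ζ hζ => ⟨hζ.1, ?_⟩
    rcases le_total l 0 with hl | hl
    · exact Or.inr (by nlinarith)
    · exact Or.inl (by nlinarith [hζ.2])


end
end

section
/- Let D be a convex set of probability measures on ℝ with finite first moments (i.e., λζ + (1−λ)ζ' ∈ D whenever ζ, ζ' ∈ D and λ ∈ (0,1)). Then each of the four functions Linf<, Linf≤, Linf>, Linf≥ is jointly convex on ℝ × D: for all ν, ν' ∈ D, all μ, μ' ∈ ℝ and all λ ∈ (0,1), one has (for example for Linf<) Linf<(λμ + (1−λ)μ', λν + (1−λ)ν') ≤ λ·Linf<(μ,ν) + (1−λ)·Linf<(μ',ν'), the inequality being in [0,+∞], and similarly for the other three functions. -/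
open MeasureTheory Filter Set ProbabilityTheory
open scoped ENNReal NNReal

noncomputable section

-- helper lemmas
lemma ofReal_sum_one {l : ℝ} (hl0 : 0 ≤ l) (hl1 : l ≤ 1) :
    ENNReal.ofReal l + ENNReal.ofReal (1 - l) = 1 := by
  rw [← ENNReal.ofReal_add hl0 (by linarith)]
  norm_num

lemma mix_prob {ζ ζ' : Measure ℝ} [IsProbabilityMeasure ζ] [IsProbabilityMeasure ζ']
    {l : ℝ} (hl0 : 0 ≤ l) (hl1 : l ≤ 1) :
    IsProbabilityMeasure (ENNReal.ofReal l • ζ + ENNReal.ofReal (1 - l) • ζ' : Measure ℝ) := by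
  constructor
  simp [Measure.add_apply, Measure.smul_apply, smul_eq_mul, ofReal_sum_one hl0 hl1]

lemma Emean_mix {ζ ζ' : Measure ℝ} (hζ : Integrable (fun x => x) ζ)
    (hζ' : Integrable (fun x => x) ζ') {l : ℝ} (hl0 : 0 ≤ l) (hl1 : l ≤ 1) :
    Emean (ENNReal.ofReal l • ζ + ENNReal.ofReal (1 - l) • ζ' : Measure ℝ)
      = l * Emean ζ + (1 - l) * Emean ζ' := by
  unfold Emean
  rw [integral_add_measure (hζ.smul_measure ENNReal.ofReal_ne_top)
    (hζ'.smul_measure ENNReal.ofReal_ne_top), integral_smul_measure, integral_smul_measure,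
    ENNReal.toReal_ofReal hl0, ENNReal.toReal_ofReal (by linarith)]
  simp [smul_eq_mul]

lemma mix_ac {ζ ζ' ν ν' : Measure ℝ} (h : ζ ≪ ν) (h' : ζ' ≪ ν') {a b : ℝ≥0∞}
    (ha : a ≠ 0) (hb : b ≠ 0) :
    (a • ζ + b • ζ' : Measure ℝ) ≪ (a • ν + b • ν' : Measure ℝ) := by
  intro s hs
  simp only [Measure.add_apply, Measure.smul_apply, smul_eq_mul, add_eq_zero,
    mul_eq_zero] at hs ⊢
  rcases hs with ⟨h1, h2⟩
  exact ⟨Or.inr (h (h1.resolve_left ha)), Or.inr (h' (h2.resolve_left hb))⟩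

lemma mul_log_ge_neg_one {t : ℝ} (ht : 0 ≤ t) : -1 ≤ t * Real.log t := by
  rcases eq_or_lt_of_le ht with h | h
  · simp [← h]
  · have h1 : Real.log t⁻¹ ≤ t⁻¹ - 1 := Real.log_le_sub_one_of_pos (by positivity)
    rw [Real.log_inv] at h1
    have h2 : 1 - t⁻¹ ≤ Real.log t := by linarith
    have h3 := mul_le_mul_of_nonneg_left h2 ht
    have h4 : t * (1 - t⁻¹) = t - 1 := by field_simp
    nlinarith

set_option maxHeartbeats 1000000 in
lemma KL_mix_le {ζ ζ' ν ν' : Measure ℝ}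
    [IsProbabilityMeasure ζ] [IsProbabilityMeasure ζ']
    [IsProbabilityMeasure ν] [IsProbabilityMeasure ν']
    {l : ℝ} (hl0 : 0 < l) (hl1 : l < 1) :
    KL (ENNReal.ofReal l • ζ + ENNReal.ofReal (1 - l) • ζ')
       (ENNReal.ofReal l • ν + ENNReal.ofReal (1 - l) • ν')
      ≤ ENNReal.ofReal l * KL ζ ν + ENNReal.ofReal (1 - l) * KL ζ' ν' := by
  set a := ENNReal.ofReal l with ha_def
  set b := ENNReal.ofReal (1 - l) with hb_def
  have ha0 : a ≠ 0 := by simp [ha_def, ENNReal.ofReal_eq_zero]; linarith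
  have hb0 : b ≠ 0 := by simp [hb_def, ENNReal.ofReal_eq_zero]; linarith
  have hat : a ≠ ⊤ := ENNReal.ofReal_ne_top
  have hbt : b ≠ ⊤ := ENNReal.ofReal_ne_top
  by_cases h1 : ζ ≪ ν ∧ Integrable (fun x => Real.log ((ζ.rnDeriv ν x).toReal)) ζ
  swap
  · have : KL ζ ν = ⊤ := by unfold KL; rw [if_neg h1]
    rw [this, ENNReal.mul_top ha0]
    simp
  by_cases h2 : ζ' ≪ ν' ∧ Integrable (fun x => Real.log ((ζ'.rnDeriv ν' x).toReal)) ζ'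
  swap
  · have : KL ζ' ν' = ⊤ := by unfold KL; rw [if_neg h2]
    rw [this, ENNReal.mul_top hb0]
    simp
  set ξ := (a • ζ + b • ζ' : Measure ℝ) with hξ_def
  set κ := (a • ν + b • ν' : Measure ℝ) with hκ_def
  haveI : IsProbabilityMeasure ξ := mix_prob hl0.le hl1.le
  haveI : IsProbabilityMeasure κ := mix_prob hl0.le hl1.le
  haveI : IsFiniteMeasure (a • ζ) := ⟨by
    rw [Measure.smul_apply, smul_eq_mul]
    exact ENNReal.mul_lt_top hat.lt_top (measure_lt_top ζ _)⟩
  haveI : IsFiniteMeasure (b • ζ') := ⟨by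
    rw [Measure.smul_apply, smul_eq_mul]
    exact ENNReal.mul_lt_top hbt.lt_top (measure_lt_top ζ' _)⟩
  haveI : IsFiniteMeasure (a • ν) := ⟨by
    rw [Measure.smul_apply, smul_eq_mul]
    exact ENNReal.mul_lt_top hat.lt_top (measure_lt_top ν _)⟩
  haveI : IsFiniteMeasure (b • ν') := ⟨by
    rw [Measure.smul_apply, smul_eq_mul]
    exact ENNReal.mul_lt_top hbt.lt_top (measure_lt_top ν' _)⟩
  haveI : IsFiniteMeasure (a • ζ + b • ζ' : Measure ℝ) := inferInstance
  haveI : IsFiniteMeasure (a • ν + b • ν' : Measure ℝ) := inferInstance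
  haveI : SigmaFinite (a • ζ + b • ζ' : Measure ℝ) := inferInstance
  haveI : SigmaFinite (a • ν + b • ν' : Measure ℝ) := inferInstance
  haveI : SigmaFinite κ := inferInstance
  haveI hLD1 : (a • ζ + b • ζ' : Measure ℝ).HaveLebesgueDecomposition κ := inferInstance
  have hAC : ξ ≪ κ := mix_ac h1.1 h2.1 ha0 hb0
  have hνκ : ν ≪ κ := by
    intro s hs
    simp only [hκ_def, Measure.add_apply, Measure.smul_apply, smul_eq_mul, add_eq_zero,
      mul_eq_zero] at hs
    exact hs.1.resolve_left ha0
  have hν'κ : ν' ≪ κ := by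
    intro s hs
    simp only [hκ_def, Measure.add_apply, Measure.smul_apply, smul_eq_mul, add_eq_zero,
      mul_eq_zero] at hs
    exact hs.2.resolve_left hb0
  have hζκ : ζ ≪ κ := h1.1.trans hνκ
  have hζ'κ : ζ' ≪ κ := h2.1.trans hν'κ
  -- a.e. identities for Radon–Nikodym derivatives
  have E1 : ξ.rnDeriv κ =ᵐ[κ] fun x => a * ζ.rnDeriv κ x + b * ζ'.rnDeriv κ x := by
    filter_upwards [Measure.rnDeriv_add (a • ζ) (b • ζ') κ,
      Measure.rnDeriv_smul_left_of_ne_top ζ κ hat,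
      Measure.rnDeriv_smul_left_of_ne_top ζ' κ hbt] with x hx1 hx2 hx3
    rw [hξ_def, hx1, Pi.add_apply, hx2, hx3]
    simp [smul_eq_mul]
  have E0 : (fun x => a * ν.rnDeriv κ x + b * ν'.rnDeriv κ x) =ᵐ[κ] fun _ => (1 : ℝ≥0∞) := by
    have h1' : κ.rnDeriv κ =ᵐ[κ] fun x => a * ν.rnDeriv κ x + b * ν'.rnDeriv κ x := by
      filter_upwards [Measure.rnDeriv_add (a • ν) (b • ν') κ,
        Measure.rnDeriv_smul_left_of_ne_top ν κ hat,
        Measure.rnDeriv_smul_left_of_ne_top ν' κ hbt] with x hx1 hx2 hx3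
      rw [hκ_def, hx1, Pi.add_apply, hx2, hx3]
      simp [smul_eq_mul]
      rfl
    exact h1'.symm.trans (Measure.rnDeriv_self κ)
  have E2 : (fun x => ζ.rnDeriv ν x * ν.rnDeriv κ x) =ᵐ[κ] ζ.rnDeriv κ :=
    Measure.rnDeriv_mul_rnDeriv h1.1
  have E2' : (fun x => ζ'.rnDeriv ν' x * ν'.rnDeriv κ x) =ᵐ[κ] ζ'.rnDeriv κ :=
    Measure.rnDeriv_mul_rnDeriv h2.1
  have E4 : ∀ᵐ x ∂κ, ζ.rnDeriv κ x < ∞ := Measure.rnDeriv_lt_top ζ κ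
  have E4' : ∀ᵐ x ∂κ, ζ'.rnDeriv κ x < ∞ := Measure.rnDeriv_lt_top ζ' κ
  have E5 : ∀ᵐ x ∂κ, ν.rnDeriv κ x < ∞ := Measure.rnDeriv_lt_top ν κ
  have E5' : ∀ᵐ x ∂κ, ν'.rnDeriv κ x < ∞ := Measure.rnDeriv_lt_top ν' κ
  -- real-valued versions
  have F1 : ∀ᵐ x ∂κ, (ξ.rnDeriv κ x).toReal
      = l * (ζ.rnDeriv κ x).toReal + (1 - l) * (ζ'.rnDeriv κ x).toReal := by
    filter_upwards [E1, E4, E4'] with x hx1 hx4 hx4'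
    rw [hx1, ENNReal.toReal_add (ENNReal.mul_ne_top hat hx4.ne) (ENNReal.mul_ne_top hbt hx4'.ne),
      ENNReal.toReal_mul, ENNReal.toReal_mul, ha_def, hb_def,
      ENNReal.toReal_ofReal hl0.le, ENNReal.toReal_ofReal (by linarith)]
  have F2 : ∀ᵐ x ∂κ, (ζ.rnDeriv κ x).toReal
      = (ζ.rnDeriv ν x).toReal * (ν.rnDeriv κ x).toReal := by
    filter_upwards [E2] with x hx
    rw [← hx, ENNReal.toReal_mul]
  have F2' : ∀ᵐ x ∂κ, (ζ'.rnDeriv κ x).toReal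
      = (ζ'.rnDeriv ν' x).toReal * (ν'.rnDeriv κ x).toReal := by
    filter_upwards [E2'] with x hx
    rw [← hx, ENNReal.toReal_mul]
  have F3 : ∀ᵐ x ∂κ, l * (ν.rnDeriv κ x).toReal + (1 - l) * (ν'.rnDeriv κ x).toReal = 1 := by
    filter_upwards [E0, E5, E5'] with x hx0 hx5 hx5'
    have := congrArg ENNReal.toReal hx0
    rw [ENNReal.toReal_add (ENNReal.mul_ne_top hat hx5.ne) (ENNReal.mul_ne_top hbt hx5'.ne),
      ENNReal.toReal_mul, ENNReal.toReal_mul, ha_def, hb_def,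
      ENNReal.toReal_ofReal hl0.le, ENNReal.toReal_ofReal (by linarith)] at this
    simpa using this
  -- integrability transfers
  have hIζ : Integrable (fun x => (ζ.rnDeriv κ x).toReal
      * Real.log ((ζ.rnDeriv ν x).toReal)) κ := by
    have := (MeasureTheory.integrable_rnDeriv_smul_iff (f := fun x => Real.log ((ζ.rnDeriv ν x).toReal))
      hζκ).mpr h1.2
    simpa [smul_eq_mul] using this
  have hIζ' : Integrable (fun x => (ζ'.rnDeriv κ x).toReal
      * Real.log ((ζ'.rnDeriv ν' x).toReal)) κ := by
    have := (MeasureTheory.integrable_rnDeriv_smul_iff (f := fun x => Real.log ((ζ'.rnDeriv ν' x).toReal))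
      hζ'κ).mpr h2.2
    simpa [smul_eq_mul] using this
  set g : ℝ → ℝ := fun x => l * ((ζ.rnDeriv κ x).toReal * Real.log ((ζ.rnDeriv ν x).toReal))
      + (1 - l) * ((ζ'.rnDeriv κ x).toReal * Real.log ((ζ'.rnDeriv ν' x).toReal)) with hg_def
  have hIg : Integrable g κ := (hIζ.const_mul l).add (hIζ'.const_mul (1 - l))
  set h : ℝ → ℝ := fun x => (ξ.rnDeriv κ x).toReal * Real.log ((ξ.rnDeriv κ x).toReal)
    with hh_def
  have hhm : AEStronglyMeasurable h κ := by
    have m1 : Measurable fun x => (ξ.rnDeriv κ x).toReal :=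
      (Measure.measurable_rnDeriv ξ κ).ennreal_toReal
    exact (m1.mul (Real.measurable_log.comp m1)).aestronglyMeasurable
  -- pointwise convexity inequality
  have hle : h ≤ᵐ[κ] g := by
    filter_upwards [F1, F2, F2', F3] with x hx1 hx2 hx2' hx3
    set rr := (ζ.rnDeriv ν x).toReal
    set rr' := (ζ'.rnDeriv ν' x).toReal
    set qq := (ν.rnDeriv κ x).toReal
    set qq' := (ν'.rnDeriv κ x).toReal
    have hs : (ξ.rnDeriv κ x).toReal = (l * qq) * rr + ((1 - l) * qq') * rr' := by
      rw [hx1, hx2, hx2']; ring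
    have hq0 : (0:ℝ) ≤ qq := ENNReal.toReal_nonneg
    have hq0' : (0:ℝ) ≤ qq' := ENNReal.toReal_nonneg
    have hcx := Real.convexOn_mul_log.2 (Set.mem_Ici.mpr (ENNReal.toReal_nonneg : (0:ℝ) ≤ rr))
      (Set.mem_Ici.mpr (ENNReal.toReal_nonneg : (0:ℝ) ≤ rr'))
      (by positivity : (0:ℝ) ≤ l * qq) (by nlinarith : (0:ℝ) ≤ (1 - l) * qq') hx3
    simp only [smul_eq_mul] at hcx
    have hg : g x = (l * qq) * (rr * Real.log rr) + ((1 - l) * qq') * (rr' * Real.log rr') := by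
      rw [hg_def]; simp only; rw [hx2, hx2']; ring
    rw [hh_def]; simp only
    rw [hs, hg]
    exact hcx
  have hIh : Integrable h κ := by
    have hbnd : Integrable (fun x => |g x| + 1) κ := hIg.abs.add (integrable_const 1)
    refine Integrable.mono' hbnd hhm ?_
    filter_upwards [hle] with x hx
    have hlb : -1 ≤ h x := mul_log_ge_neg_one ENNReal.toReal_nonneg
    rw [Real.norm_eq_abs, abs_le]
    constructor
    · have := abs_nonneg (g x); linarith
    · have := le_abs_self (g x); linarith
  have hint_le : ∫ x, h x ∂κ ≤ ∫ x, g x ∂κ := integral_mono_ae hIh hIg hle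
  -- KL of the mixture
  have hKLmix : Integrable (fun x => Real.log ((ξ.rnDeriv κ x).toReal)) ξ := by
    refine (MeasureTheory.integrable_rnDeriv_smul_iff (f := fun x => Real.log ((ξ.rnDeriv κ x).toReal))
      hAC).mp ?_
    simpa [smul_eq_mul, ← hh_def] using hIh
  have hKLξ : KL ξ κ = ENNReal.ofReal (∫ x, Real.log ((ξ.rnDeriv κ x).toReal) ∂ξ) := by
    unfold KL; rw [if_pos ⟨hAC, hKLmix⟩]
  have hKLζ : KL ζ ν = ENNReal.ofReal (∫ x, Real.log ((ζ.rnDeriv ν x).toReal) ∂ζ) := by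
    unfold KL; rw [if_pos h1]
  have hKLζ' : KL ζ' ν' = ENNReal.ofReal (∫ x, Real.log ((ζ'.rnDeriv ν' x).toReal) ∂ζ') := by
    unfold KL; rw [if_pos h2]
  have hiξ : ∫ x, Real.log ((ξ.rnDeriv κ x).toReal) ∂ξ = ∫ x, h x ∂κ := by
    rw [← MeasureTheory.integral_rnDeriv_smul hAC]
    simp [hh_def, smul_eq_mul]
  have hiζ : ∫ x, Real.log ((ζ.rnDeriv ν x).toReal) ∂ζ
      = ∫ x, (ζ.rnDeriv κ x).toReal * Real.log ((ζ.rnDeriv ν x).toReal) ∂κ := by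
    rw [← MeasureTheory.integral_rnDeriv_smul hζκ]
    simp [smul_eq_mul]
  have hiζ' : ∫ x, Real.log ((ζ'.rnDeriv ν' x).toReal) ∂ζ'
      = ∫ x, (ζ'.rnDeriv κ x).toReal * Real.log ((ζ'.rnDeriv ν' x).toReal) ∂κ := by
    rw [← MeasureTheory.integral_rnDeriv_smul hζ'κ]
    simp [smul_eq_mul]
  have hgint : ∫ x, g x ∂κ
      = l * ∫ x, Real.log ((ζ.rnDeriv ν x).toReal) ∂ζ
        + (1 - l) * ∫ x, Real.log ((ζ'.rnDeriv ν' x).toReal) ∂ζ' := by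
    rw [hiζ, hiζ', hg_def, integral_add (hIζ.const_mul l) (hIζ'.const_mul (1 - l)),
      integral_const_mul, integral_const_mul]
  rw [hKLξ, hKLζ, hKLζ', hiξ]
  calc ENNReal.ofReal (∫ x, h x ∂κ) ≤ ENNReal.ofReal (∫ x, g x ∂κ) :=
        ENNReal.ofReal_le_ofReal hint_le
    _ = ENNReal.ofReal (l * ∫ x, Real.log ((ζ.rnDeriv ν x).toReal) ∂ζ
        + (1 - l) * ∫ x, Real.log ((ζ'.rnDeriv ν' x).toReal) ∂ζ') := by rw [hgint]
    _ ≤ ENNReal.ofReal (l * ∫ x, Real.log ((ζ.rnDeriv ν x).toReal) ∂ζ)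
        + ENNReal.ofReal ((1 - l) * ∫ x, Real.log ((ζ'.rnDeriv ν' x).toReal) ∂ζ') :=
        ENNReal.ofReal_add_le
    _ = a * ENNReal.ofReal (∫ x, Real.log ((ζ.rnDeriv ν x).toReal) ∂ζ)
        + b * ENNReal.ofReal (∫ x, Real.log ((ζ'.rnDeriv ν' x).toReal) ∂ζ') := by
        rw [ENNReal.ofReal_mul hl0.le, ENNReal.ofReal_mul (by linarith : (0:ℝ) ≤ 1 - l)]

lemma Linf_aux (D : Set (Measure ℝ))
    (hD : ∀ ζ ∈ D, IsProbabilityMeasure ζ ∧ Integrable (fun x => x) ζ)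
    (hconv : ∀ ζ ∈ D, ∀ ζ' ∈ D, ∀ l ∈ Set.Ioo (0:ℝ) 1,
      (ENNReal.ofReal l • ζ + ENNReal.ofReal (1 - l) • ζ' : Measure ℝ) ∈ D)
    {ν ν' : Measure ℝ} (hν : ν ∈ D) (hν' : ν' ∈ D) {l : ℝ} (hl : l ∈ Set.Ioo (0:ℝ) 1)
    (R R' Rb : ℝ → Prop)
    (hR : ∀ s t : ℝ, R s → R' t → Rb (l * s + (1 - l) * t)) :
    (⨅ ζ ∈ {ζ ∈ D | Rb (Emean ζ)},
        KL ζ (ENNReal.ofReal l • ν + ENNReal.ofReal (1 - l) • ν'))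
      ≤ ENNReal.ofReal l * (⨅ ζ ∈ {ζ ∈ D | R (Emean ζ)}, KL ζ ν)
        + ENNReal.ofReal (1 - l) * (⨅ ζ ∈ {ζ ∈ D | R' (Emean ζ)}, KL ζ ν') := by
  obtain ⟨hl0, hl1⟩ := hl
  set a := ENNReal.ofReal l with ha_def
  set b := ENNReal.ofReal (1 - l) with hb_def
  have ha0 : a ≠ 0 := by simp [ha_def, ENNReal.ofReal_eq_zero]; linarith
  have hb0 : b ≠ 0 := by simp [hb_def, ENNReal.ofReal_eq_zero]; linarith
  have ha1 : a ≤ 1 := by rw [ha_def, ← ENNReal.ofReal_one]; exact ENNReal.ofReal_le_ofReal (by linarith)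
  have hb1 : b ≤ 1 := by rw [hb_def, ← ENNReal.ofReal_one]; exact ENNReal.ofReal_le_ofReal (by linarith)
  set I := ⨅ ζ ∈ {ζ ∈ D | R (Emean ζ)}, KL ζ ν with hI_def
  set I' := ⨅ ζ ∈ {ζ ∈ D | R' (Emean ζ)}, KL ζ ν' with hI'_def
  refine ENNReal.le_of_forall_pos_le_add fun ε hε hlt => ?_
  have hIne : I ≠ ⊤ := by
    intro hI
    rw [hI, ENNReal.mul_top ha0] at hlt
    simp at hlt
  have hI'ne : I' ≠ ⊤ := by
    intro hI
    rw [hI, ENNReal.mul_top hb0] at hlt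
    simp at hlt
  have hεhalf : ((ε : ℝ≥0∞) / 2) ≠ 0 := by
    simp [ENNReal.div_eq_zero_iff]
    exact_mod_cast hε.ne'
  obtain ⟨ζ, hζS, hζlt⟩ : ∃ ζ ∈ {ζ ∈ D | R (Emean ζ)}, KL ζ ν < I + ε / 2 := by
    by_contra hcon
    push_neg at hcon
    exact absurd (le_iInf₂ hcon) (not_le.mpr (ENNReal.lt_add_right hIne hεhalf))
  obtain ⟨ζ', hζ'S, hζ'lt⟩ : ∃ ζ' ∈ {ζ ∈ D | R' (Emean ζ)}, KL ζ' ν' < I' + ε / 2 := by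
    by_contra hcon
    push_neg at hcon
    exact absurd (le_iInf₂ hcon) (not_le.mpr (ENNReal.lt_add_right hI'ne hεhalf))
  haveI := (hD ζ hζS.1).1
  haveI := (hD ζ' hζ'S.1).1
  haveI := (hD ν hν).1
  haveI := (hD ν' hν').1
  have hmem : (a • ζ + b • ζ' : Measure ℝ) ∈ {ζ ∈ D | Rb (Emean ζ)} := by
    refine ⟨hconv ζ hζS.1 ζ' hζ'S.1 l ⟨hl0, hl1⟩, ?_⟩
    rw [ha_def, hb_def, Emean_mix (hD ζ hζS.1).2 (hD ζ' hζ'S.1).2 hl0.le hl1.le]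
    exact hR _ _ hζS.2 hζ'S.2
  calc (⨅ ζ ∈ {ζ ∈ D | Rb (Emean ζ)}, KL ζ (a • ν + b • ν'))
      ≤ KL (a • ζ + b • ζ') (a • ν + b • ν') := iInf₂_le _ hmem
    _ ≤ a * KL ζ ν + b * KL ζ' ν' := KL_mix_le hl0 hl1
    _ ≤ a * (I + ε / 2) + b * (I' + ε / 2) :=
        add_le_add (mul_le_mul_right hζlt.le _) (mul_le_mul_right hζ'lt.le _)
    _ = (a * I + b * I') + (a * (ε / 2) + b * (ε / 2)) := by ring
    _ ≤ (a * I + b * I') + ((ε : ℝ≥0∞) / 2 + (ε : ℝ≥0∞) / 2) := by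
        refine add_le_add_right (add_le_add ?_ ?_) _
        · exact mul_le_of_le_one_left zero_le ha1
        · exact mul_le_of_le_one_left zero_le hb1
    _ = (a * I + b * I') + ε := by rw [ENNReal.add_halves]

/-- Joint convexity of `Linf<`, `Linf≤`, `Linf>`, `Linf≥` on `ℝ × D` for a convex model `D`
of probability measures on ℝ with finite first moments. -/
theorem Linf_jointly_convex (D : Set (Measure ℝ))
    (hD : ∀ ζ ∈ D, IsProbabilityMeasure ζ ∧ Integrable (fun x => x) ζ)
    (hconv : ∀ ζ ∈ D, ∀ ζ' ∈ D, ∀ l ∈ Set.Ioo (0:ℝ) 1,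
      (ENNReal.ofReal l • ζ + ENNReal.ofReal (1 - l) • ζ' : Measure ℝ) ∈ D) :
    ∀ ν ∈ D, ∀ ν' ∈ D, ∀ μ μ' : ℝ, ∀ l ∈ Set.Ioo (0:ℝ) 1,
      (Linflt D (l * μ + (1 - l) * μ') (ENNReal.ofReal l • ν + ENNReal.ofReal (1 - l) • ν')
          ≤ ENNReal.ofReal l * Linflt D μ ν + ENNReal.ofReal (1 - l) * Linflt D μ' ν') ∧
      (Linfle D (l * μ + (1 - l) * μ') (ENNReal.ofReal l • ν + ENNReal.ofReal (1 - l) • ν')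
          ≤ ENNReal.ofReal l * Linfle D μ ν + ENNReal.ofReal (1 - l) * Linfle D μ' ν') ∧
      (Linfgt D (l * μ + (1 - l) * μ') (ENNReal.ofReal l • ν + ENNReal.ofReal (1 - l) • ν')
          ≤ ENNReal.ofReal l * Linfgt D μ ν + ENNReal.ofReal (1 - l) * Linfgt D μ' ν') ∧
      (Linfge D (l * μ + (1 - l) * μ') (ENNReal.ofReal l • ν + ENNReal.ofReal (1 - l) • ν')
          ≤ ENNReal.ofReal l * Linfge D μ ν + ENNReal.ofReal (1 - l) * Linfge D μ' ν') := by
  intro ν hν ν' hν' μ μ' l hl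
  obtain ⟨hl0, hl1⟩ := hl
  refine ⟨?_, ?_, ?_, ?_⟩
  · exact Linf_aux D hD hconv hν hν' ⟨hl0, hl1⟩ (fun s => s < μ) (fun t => t < μ')
      (fun u => u < l * μ + (1 - l) * μ')
      (fun s t hs ht => by nlinarith)
  · exact Linf_aux D hD hconv hν hν' ⟨hl0, hl1⟩ (fun s => s ≤ μ) (fun t => t ≤ μ')
      (fun u => u ≤ l * μ + (1 - l) * μ')
      (fun s t hs ht => by nlinarith)
  · exact Linf_aux D hD hconv hν hν' ⟨hl0, hl1⟩ (fun s => μ < s) (fun t => μ' < t)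
      (fun u => l * μ + (1 - l) * μ' < u)
      (fun s t hs ht => by nlinarith)
  · exact Linf_aux D hD hconv hν hν' ⟨hl0, hl1⟩ (fun s => μ ≤ s) (fun t => μ' ≤ t)
      (fun u => l * μ + (1 - l) * μ' ≤ u)
      (fun s t hs ht => by nlinarith)

end
end

section
/- Consider the model D = P[0,1] and let ν ∈ P[0,1] with m(ν) the minimum of its closed support. Then the function x ↦ Linf<(x,ν) is finite and continuous on the interval (m(ν), +∞), and Linf<(μ,ν) = Linf≤(μ,ν) for every μ ≠ m(ν). -/
open MeasureTheory Filter Set ProbabilityTheory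
open scoped ENNReal NNReal

noncomputable section

-- auxiliary lemmas
lemma Pcc_ae {ζ : Measure ℝ} (hζ : ζ ∈ Pcc) : ∀ᵐ x ∂ζ, x ∈ Icc (0:ℝ) 1 := by
  rw [ae_iff]
  have := hζ.2
  refine measure_mono_null (fun x hx => ?_) this
  simpa using hx

lemma integrable_id_of_Pcc {ζ : Measure ℝ} (hζ : ζ ∈ Pcc) : Integrable (fun x : ℝ => x) ζ := by
  haveI := hζ.1
  refine Integrable.mono' (integrable_const 1) measurable_id.aestronglyMeasurable ?_
  filter_upwards [Pcc_ae hζ] with x hx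
  rw [Real.norm_eq_abs, abs_le]
  constructor <;> [linarith [hx.1]; exact hx.2]

lemma isClosed_msupport (ν : Measure ℝ) : IsClosed (msupport ν) := by
  rw [← isOpen_compl_iff, isOpen_iff_mem_nhds]
  intro x hx
  simp only [msupport, mem_compl_iff, mem_setOf_eq, not_forall] at hx
  obtain ⟨U, hU, hU0⟩ := hx
  obtain ⟨V, hVU, hVo, hxV⟩ := mem_nhds_iff.1 hU
  push_neg at hU0
  filter_upwards [hVo.mem_nhds hxV] with y hy
  simp only [msupport, mem_compl_iff, mem_setOf_eq, not_forall]
  exact ⟨V, hVo.mem_nhds hy, by push_neg; exact measure_mono_null hVU hU0⟩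

lemma msupport_compl_null (ν : Measure ℝ) : ν (msupport ν)ᶜ = 0 := by
  refine measure_null_of_locally_null _ (fun x hx => ?_)
  simp only [msupport, mem_compl_iff, mem_setOf_eq, not_forall] at hx
  obtain ⟨U, hU, hU0⟩ := hx
  push_neg at hU0
  exact ⟨U, nhdsWithin_le_nhds hU, hU0⟩

lemma msupport_subset {ν : Measure ℝ} (hν : ν ∈ Pcc) : msupport ν ⊆ Icc (0:ℝ) 1 := by
  intro x hx
  by_contra hxI
  exact hx _ ((isClosed_Icc.isOpen_compl).mem_nhds hxI) hν.2

lemma msupport_nonempty {ν : Measure ℝ} (hν : ν ∈ Pcc) : (msupport ν).Nonempty := by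
  haveI := hν.1
  by_contra h
  rw [not_nonempty_iff_eq_empty] at h
  have := msupport_compl_null ν
  rw [h, compl_empty] at this
  simp at this

lemma mMin_mem {ν : Measure ℝ} (hν : ν ∈ Pcc) : mMin ν ∈ msupport ν :=
  (isClosed_msupport ν).csInf_mem (msupport_nonempty hν)
    (bddBelow_Icc.mono (msupport_subset hν))

lemma nu_Iio_mMin {ν : Measure ℝ} (hν : ν ∈ Pcc) : ν (Iio (mMin ν)) = 0 := by
  refine measure_mono_null (fun y hy => ?_) (msupport_compl_null ν)
  intro hy'
  exact absurd (csInf_le (bddBelow_Icc.mono (msupport_subset hν)) hy') (not_le.2 hy)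

lemma measure_Icc_ne_zero {ν : Measure ℝ} (hν : ν ∈ Pcc) {t : ℝ} (ht : mMin ν < t) :
    ν (Icc 0 t) ≠ 0 := by
  have hU : Ioo (mMin ν - 1) t ∈ nhds (mMin ν) := Ioo_mem_nhds (by linarith) ht
  have h1 : ν (Ioo (mMin ν - 1) t) ≠ 0 := mMin_mem hν _ hU
  intro h0
  apply h1
  have hsub : Ioo (mMin ν - 1) t ⊆ Icc 0 t ∪ (Icc (0:ℝ) 1)ᶜ := by
    intro y hy
    rcases le_or_gt 0 y with h | h
    · exact Or.inl ⟨h, hy.2.le⟩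
    · exact Or.inr (fun hc => absurd hc.1 (not_le.2 h))
  refine measure_mono_null hsub ?_
  exact le_antisymm (le_trans (measure_union_le _ _) (by rw [h0, hν.2]; simp)) (by simp)

lemma Emean_ge_mMin {ν ζ : Measure ℝ} (hν : ν ∈ Pcc) (hζ : ζ ∈ Pcc) (hac : ζ ≪ ν) :
    mMin ν ≤ Emean ζ := by
  haveI := hζ.1
  have h0 : ζ (Iio (mMin ν)) = 0 := hac (nu_Iio_mMin hν)
  have hae : ∀ᵐ x ∂ζ, mMin ν ≤ x := by
    rw [ae_iff]; push_neg
    simpa [Iio] using h0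
  calc mMin ν = ∫ _, mMin ν ∂ζ := by simp
  _ ≤ ∫ x, x ∂ζ := integral_mono_ae (integrable_const _) (integrable_id_of_Pcc hζ) hae


set_option maxHeartbeats 2000000 in
lemma main_construction (ν : Measure ℝ) (hν : ν ∈ Pcc) {t : ℝ} (ht : mMin ν < t) :
    ∃ C : ℝ, 0 ≤ C ∧
      (∃ ρ ∈ Pcc, Emean ρ ≤ t ∧ KL ρ ν ≠ ⊤) ∧
      (∀ ζ ∈ Pcc, ∀ ε : ℝ, 0 < ε → ε < 1 →
        ∃ ξ ∈ Pcc, Emean ξ ≤ (1 - ε) * Emean ζ + ε * t ∧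
          KL ξ ν ≤ KL ζ ν + ENNReal.ofReal (ε * C)) := by
  haveI := hν.1
  set A : Set ℝ := Icc 0 t with hA
  have hAm : MeasurableSet A := measurableSet_Icc
  have hA0 : ν A ≠ 0 := measure_Icc_ne_zero hν ht
  have hAtop : ν A ≠ ⊤ := (measure_lt_top ν A).ne
  set cE : ℝ≥0∞ := (ν A)⁻¹ with hcE
  have hcE0 : cE ≠ 0 := ENNReal.inv_ne_zero.2 hAtop
  have hcEtop : cE ≠ ⊤ := ENNReal.inv_ne_top.2 hA0
  set cR : ℝ := cE.toReal with hcR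
  have hcR0 : 0 < cR := ENNReal.toReal_pos hcE0 hcEtop
  set ρ : Measure ℝ := cE • ν.restrict A with hρdef
  haveI hρprob : IsProbabilityMeasure ρ := ⟨by
    rw [hρdef, Measure.smul_apply, Measure.restrict_apply_univ, smul_eq_mul,
      ENNReal.inv_mul_cancel hA0 hAtop]⟩
  have hρPcc : ρ ∈ Pcc := by
    refine ⟨hρprob, ?_⟩
    rw [hρdef, Measure.smul_apply, Measure.restrict_apply (measurableSet_Icc.compl),
      measure_mono_null inter_subset_left hν.2]
    simp
  have hρν : ρ ≪ ν :=
    (Measure.absolutelyContinuous_of_le Measure.restrict_le_self).smul_left cE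
  have hρA : ρ Aᶜ = 0 := by
    rw [hρdef, Measure.smul_apply, Measure.restrict_apply hAm.compl]
    simp
  have hρAae : ∀ᵐ x ∂ρ, x ∈ A := by
    rw [ae_iff]
    refine measure_mono_null (fun x hx => ?_) hρA
    simpa using hx
  have hEρ : Emean ρ ≤ t := by
    have hae : ∀ᵐ x ∂ρ, x ≤ t := hρAae.mono fun x hx => hx.2
    calc Emean ρ = ∫ x, x ∂ρ := rfl
    _ ≤ ∫ _, t ∂ρ := integral_mono_ae (integrable_id_of_Pcc hρPcc) (integrable_const _) hae
    _ = t := by simp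
  have hgν : ρ.rnDeriv ν =ᵐ[ν] fun x => cE * A.indicator 1 x := by
    have h1 := Measure.rnDeriv_restrict_self ν hAm
    have h2 := Measure.rnDeriv_smul_left_of_ne_top (ν.restrict A) ν hcEtop
    rw [← hρdef] at h2
    filter_upwards [h1, h2] with x hx1 hx2
    rw [hx2, Pi.smul_apply, hx1, smul_eq_mul]
  -- KL of ρ is finite
  have hρlog : (fun x => Real.log ((ρ.rnDeriv ν x).toReal)) =ᵐ[ρ] fun _ => Real.log cR := by
    filter_upwards [hρν.ae_le hgν, hρAae] with x hx hxA
    rw [hx, indicator_of_mem hxA, Pi.one_apply, mul_one]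
  have hρKLint : Integrable (fun x => Real.log ((ρ.rnDeriv ν x).toReal)) ρ :=
    (integrable_const (Real.log cR)).congr hρlog.symm
  have hKLρ : KL ρ ν ≠ ⊤ := by
    unfold KL
    rw [if_pos ⟨hρν, hρKLint⟩]
    exact ENNReal.ofReal_ne_top
  refine ⟨3 * cR, by positivity, ⟨ρ, hρPcc, hEρ, hKLρ⟩, ?_⟩
  intro ζ hζ ε hε0 hε1
  haveI := hζ.1
  set e1 : ℝ≥0∞ := ENNReal.ofReal (1 - ε) with he1
  set e2 : ℝ≥0∞ := ENNReal.ofReal ε with he2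
  have he1top : e1 ≠ ⊤ := ENNReal.ofReal_ne_top
  have he2top : e2 ≠ ⊤ := ENNReal.ofReal_ne_top
  have he10 : e1 ≠ 0 := by
    rw [he1, Ne, ENNReal.ofReal_eq_zero, not_le]; linarith
  have he20 : e2 ≠ 0 := by
    rw [he2, Ne, ENNReal.ofReal_eq_zero, not_le]; linarith
  have he1R : e1.toReal = 1 - ε := ENNReal.toReal_ofReal (by linarith)
  have he2R : e2.toReal = ε := ENNReal.toReal_ofReal hε0.le
  have he12 : e1 + e2 = 1 := by
    rw [he1, he2, ← ENNReal.ofReal_add (by linarith) hε0.le]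
    norm_num
  set ξ : Measure ℝ := e1 • ζ + e2 • ρ with hξdef
  haveI hξprob : IsProbabilityMeasure ξ := ⟨by
    rw [hξdef, Measure.add_apply, Measure.smul_apply, Measure.smul_apply, smul_eq_mul,
      smul_eq_mul, measure_univ, measure_univ, mul_one, mul_one, he12]⟩
  have hξPcc : ξ ∈ Pcc := by
    refine ⟨hξprob, ?_⟩
    rw [hξdef, Measure.add_apply, Measure.smul_apply, Measure.smul_apply, hζ.2, hρPcc.2]
    simp
  have hmean : Emean ξ ≤ (1 - ε) * Emean ζ + ε * t := by
    have hEξ : Emean ξ = (1-ε) * Emean ζ + ε * Emean ρ := by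
      rw [Emean, hξdef,
        integral_add_measure ((integrable_id_of_Pcc hζ).smul_measure he1top)
          ((integrable_id_of_Pcc hρPcc).smul_measure he2top),
        integral_smul_measure, integral_smul_measure, he1R, he2R, smul_eq_mul, smul_eq_mul]
      rfl
    rw [hEξ]
    have : 0 ≤ ε := hε0.le
    nlinarith [hEρ]
  by_cases hKζ : KL ζ ν = ⊤
  · exact ⟨ξ, hξPcc, hmean, by rw [hKζ]; simp⟩
  have hcond : ζ ≪ ν ∧ Integrable (fun x => Real.log ((ζ.rnDeriv ν x).toReal)) ζ := by
    by_contra h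
    exact hKζ (by unfold KL; rw [if_neg h])
  obtain ⟨hζν, hint⟩ := hcond
  have hξν : ξ ≪ ν := by
    intro s hs
    rw [hξdef, Measure.add_apply, Measure.smul_apply, Measure.smul_apply, hζν hs, hρν hs]
    simp
  haveI h1fin : IsFiniteMeasure (e1 • ζ) := by
    refine ⟨?_⟩
    rw [Measure.smul_apply, smul_eq_mul, measure_univ, mul_one]
    exact he1top.lt_top
  haveI h2fin : IsFiniteMeasure (e2 • ρ) := by
    refine ⟨?_⟩
    rw [Measure.smul_apply, smul_eq_mul, measure_univ, mul_one]
    exact he2top.lt_top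
  have hξd : ξ.rnDeriv ν =ᵐ[ν] fun x => e1 * ζ.rnDeriv ν x + e2 * ρ.rnDeriv ν x := by
    have hadd := Measure.rnDeriv_add (e1 • ζ) (e2 • ρ) ν
    have hs1 := Measure.rnDeriv_smul_left_of_ne_top ζ ν he1top
    have hs2 := Measure.rnDeriv_smul_left_of_ne_top ρ ν he2top
    rw [← hξdef] at hadd
    filter_upwards [hadd, hs1, hs2] with x h h1 h2
    rw [h, Pi.add_apply, h1, h2, Pi.smul_apply, Pi.smul_apply, smul_eq_mul, smul_eq_mul]
  set f : ℝ → ℝ := fun x => (ζ.rnDeriv ν x).toReal with hfdef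
  set H : ℝ → ℝ := fun x => (ξ.rnDeriv ν x).toReal with hHdef
  -- the key a.e. identity w.r.t. ν
  have hν1 : ∀ᵐ x ∂ν, H x = (1-ε) * f x + ε * (cR * A.indicator (fun _ => (1:ℝ)) x)
      ∧ ζ.rnDeriv ν x < ⊤ := by
    filter_upwards [hξd, hgν, Measure.rnDeriv_lt_top ζ ν] with x hx hg hft
    refine ⟨?_, hft⟩
    have hgfin : cE * A.indicator 1 x ≠ ⊤ := by
      by_cases hxA : x ∈ A <;>
        simp [indicator_of_mem, indicator_of_notMem, hxA, ENNReal.mul_eq_top, hcEtop]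
    rw [hHdef]
    simp only
    rw [hx, hg, ENNReal.toReal_add (by
        exact ENNReal.mul_ne_top he1top hft.ne) (ENNReal.mul_ne_top he2top hgfin),
      ENNReal.toReal_mul, ENNReal.toReal_mul, he1R, he2R]
    congr 1
    rw [ENNReal.toReal_mul]
    congr 1
    by_cases hxA : x ∈ A <;> simp [hxA, hcR]
  -- positivity of f, ζ-a.e.
  have hfpos : ∀ᵐ x ∂ζ, 0 < f x := by
    filter_upwards [Measure.rnDeriv_pos hζν, hζν.ae_le (Measure.rnDeriv_lt_top ζ ν)] with x h1 h2
    exact ENNReal.toReal_pos h1.ne' h2.ne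
  -- the inverse of the density
  set φ : ℝ → ℝ := fun x => ((ζ.rnDeriv ν x)⁻¹).toReal with hφdef
  have hφeq : ∀ x, φ x = (f x)⁻¹ := fun x => ENNReal.toReal_inv _
  have hφnonneg : ∀ x, 0 ≤ φ x := fun x => ENNReal.toReal_nonneg
  have hφlint : ∫⁻ x, (ζ.rnDeriv ν x)⁻¹ ∂ζ ≤ 1 := by
    rw [← MeasureTheory.lintegral_rnDeriv_mul hζν
      (show Measurable (fun x => (ζ.rnDeriv ν x)⁻¹) from (Measure.measurable_rnDeriv ζ ν).inv).aemeasurable]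
    calc ∫⁻ x, ζ.rnDeriv ν x * (ζ.rnDeriv ν x)⁻¹ ∂ν ≤ ∫⁻ _, 1 ∂ν :=
      lintegral_mono fun x => ENNReal.mul_inv_le_one _
    _ = 1 := by simp
  have hφint : Integrable φ ζ :=
    integrable_toReal_of_lintegral_ne_top ((Measure.measurable_rnDeriv ζ ν).inv).aemeasurable
      (by exact ne_top_of_le_ne_top ENNReal.one_ne_top hφlint)
  have hφval : ∫ x, φ x ∂ζ ≤ 1 := by
    have hlt : ∀ᵐ x ∂ζ, (ζ.rnDeriv ν x)⁻¹ < ⊤ := by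
      filter_upwards [Measure.rnDeriv_pos hζν] with x hx
      simpa [ENNReal.inv_lt_top] using hx
    rw [hφdef]
    rw [integral_toReal (show Measurable (fun x => (ζ.rnDeriv ν x)⁻¹) from (Measure.measurable_rnDeriv ζ ν).inv).aemeasurable hlt]
    calc (∫⁻ x, (ζ.rnDeriv ν x)⁻¹ ∂ζ).toReal ≤ (1 : ℝ≥0∞).toReal :=
      ENNReal.toReal_mono ENNReal.one_ne_top hφlint
    _ = 1 := by simp
  set ψ : ℝ → ℝ := fun x => Real.log (H x) - Real.log (f x) with hψdef
  have hψbound : ∀ᵐ x ∂ζ, Real.log (1-ε) ≤ ψ x ∧ ψ x ≤ ε * cR * φ x := by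
    filter_upwards [hζν.ae_le hν1, hfpos] with x hx hf0
    obtain ⟨hH, -⟩ := hx
    have hind : 0 ≤ A.indicator (fun _ => (1:ℝ)) x ∧ A.indicator (fun _ => (1:ℝ)) x ≤ 1 := by
      by_cases hxA : x ∈ A <;> simp [hxA]
    have h00 : 0 ≤ ε * (cR * A.indicator (fun _ => (1:ℝ)) x) :=
      mul_nonneg hε0.le (mul_nonneg hcR0.le hind.1)
    have h01 : ε * (cR * A.indicator (fun _ => (1:ℝ)) x) ≤ ε * cR := by
      have := mul_le_mul_of_nonneg_left hind.2 hcR0.le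
      have := mul_le_mul_of_nonneg_left this hε0.le
      linarith
    have hH1 : (1-ε) * f x ≤ H x := by rw [hH]; linarith
    have hH2 : H x ≤ f x + ε * cR := by
      rw [hH]
      have : (1-ε) * f x ≤ f x := by nlinarith
      linarith
    have hHpos : 0 < H x := lt_of_lt_of_le (mul_pos (by linarith) hf0) hH1
    constructor
    · have h1 : Real.log ((1-ε) * f x) ≤ Real.log (H x) :=
        Real.log_le_log (by nlinarith) hH1
      rw [Real.log_mul (by linarith) hf0.ne'] at h1
      simp only [hψdef]
      linarith
    · have h1 : Real.log (H x) ≤ Real.log (f x + ε * cR) := Real.log_le_log hHpos hH2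
      have h2 : Real.log (f x + ε * cR) - Real.log (f x) ≤ ε * cR / f x := by
        rw [← Real.log_div (by positivity) hf0.ne']
        have h3 := Real.log_le_sub_one_of_pos (show 0 < (f x + ε*cR)/f x by positivity)
        have heq : (f x + ε*cR)/f x - 1 = ε*cR/f x := by field_simp; ring
        linarith
      have h4 : ψ x ≤ ε * cR / f x := by simp only [hψdef]; linarith
      rw [hφeq x]
      rw [div_eq_mul_inv] at h4
      exact h4
  have hψmeas : AEStronglyMeasurable ψ ζ := by
    apply Measurable.aestronglyMeasurable
    exact (Real.measurable_log.comp (Measure.measurable_rnDeriv ξ ν).ennreal_toReal).sub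
      (Real.measurable_log.comp (Measure.measurable_rnDeriv ζ ν).ennreal_toReal)
  have hψint : Integrable ψ ζ := by
    refine Integrable.mono'
      ((integrable_const |Real.log (1-ε)|).add (hφint.const_mul (ε * cR))) hψmeas ?_
    filter_upwards [hψbound] with x hx
    rw [Real.norm_eq_abs, abs_le]
    have h0 : 0 ≤ ε * cR * φ x := mul_nonneg (mul_nonneg hε0.le hcR0.le) (hφnonneg x)
    constructor
    · have := neg_abs_le (Real.log (1-ε))
      simp only [Pi.add_apply]
      linarith [hx.1]
    · simp only [Pi.add_apply]
      linarith [hx.2, abs_nonneg (Real.log (1-ε))]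
  have hlogH_ζ : Integrable (fun x => Real.log (H x)) ζ := by
    have heq : (fun x => Real.log (H x)) = (fun x => Real.log (f x)) + ψ := by
      funext x; simp [hψdef]
    rw [heq]
    exact hint.add hψint
  have hIζbound : ∫ x, Real.log (H x) ∂ζ ≤ (∫ x, Real.log (f x) ∂ζ) + ε * cR := by
    have h1 : ∫ x, Real.log (H x) ∂ζ = (∫ x, Real.log (f x) ∂ζ) + ∫ x, ψ x ∂ζ := by
      rw [← integral_add hint hψint]
      congr 1
      funext x
      simp [hψdef, hfdef]
    have h2 : ∫ x, ψ x ∂ζ ≤ ∫ x, ε * cR * φ x ∂ζ :=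
      integral_mono_ae hψint (hφint.const_mul _) (hψbound.mono fun x h => h.2)
    have h3 : ∫ x, ε * cR * φ x ∂ζ = ε * cR * ∫ x, φ x ∂ζ := integral_const_mul _ _
    nlinarith [hφval, hcR0.le, hε0.le, mul_nonneg hε0.le hcR0.le]
  -- ρ-side
  have hρfacts : ∀ᵐ x ∂ρ, Real.log (H x) ≤ f x + cR ∧ Real.log (ε * cR) ≤ Real.log (H x) := by
    filter_upwards [hρν.ae_le hν1, hρAae] with x hx hxA
    obtain ⟨hH, -⟩ := hx
    rw [indicator_of_mem hxA, mul_one] at hH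
    have hf0 : 0 ≤ f x := ENNReal.toReal_nonneg
    have hH2 : H x ≤ f x + cR := by
      rw [hH]
      have h1 : (1-ε) * f x ≤ f x := by nlinarith
      have h2 : ε * cR ≤ cR := by nlinarith
      linarith
    have hH1 : ε * cR ≤ H x := by
      rw [hH]
      nlinarith
    have hHpos : 0 ≤ H x := ENNReal.toReal_nonneg
    constructor
    · exact (Real.log_le_self hHpos).trans hH2
    · exact Real.log_le_log (by positivity) hH1
  have hfmeasρ : AEMeasurable (ζ.rnDeriv ν) ρ := (Measure.measurable_rnDeriv ζ ν).aemeasurable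
  have hflintρ : ∫⁻ x, ζ.rnDeriv ν x ∂ρ ≤ cE := by
    rw [hρdef, lintegral_smul_measure]
    calc cE * ∫⁻ x, ζ.rnDeriv ν x ∂(ν.restrict A) ≤ cE * ζ A := by
          gcongr
          exact Measure.setLIntegral_rnDeriv_le A
    _ ≤ cE * 1 := by gcongr; exact prob_le_one
    _ = cE := mul_one cE
  have hfint_ρ : Integrable f ρ :=
    integrable_toReal_of_lintegral_ne_top hfmeasρ
      (by exact ne_top_of_le_ne_top hcEtop hflintρ)
  have hfρval : ∫ x, f x ∂ρ ≤ cR := by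
    have hlt : ∀ᵐ x ∂ρ, ζ.rnDeriv ν x < ⊤ := hρν.ae_le (Measure.rnDeriv_lt_top ζ ν)
    rw [hfdef]
    rw [integral_toReal hfmeasρ hlt]
    exact ENNReal.toReal_mono hcEtop hflintρ
  have hlogHmeas : Measurable fun x => Real.log (H x) :=
    Real.measurable_log.comp (Measure.measurable_rnDeriv ξ ν).ennreal_toReal
  have hlogH_ρ : Integrable (fun x => Real.log (H x)) ρ := by
    refine Integrable.mono'
      ((integrable_const (|Real.log (ε * cR)| + cR)).add hfint_ρ)
      hlogHmeas.aestronglyMeasurable ?_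
    filter_upwards [hρfacts] with x hx
    have hf0 : 0 ≤ f x := ENNReal.toReal_nonneg
    rw [Real.norm_eq_abs, abs_le]
    constructor
    · have := neg_abs_le (Real.log (ε * cR))
      simp only [Pi.add_apply]
      linarith [hx.2, hcR0.le]
    · simp only [Pi.add_apply]
      linarith [hx.1, le_abs_self (Real.log (ε * cR)), abs_nonneg (Real.log (ε * cR))]
  have hIρbound : ∫ x, Real.log (H x) ∂ρ ≤ 2 * cR := by
    have h2 : ∫ x, Real.log (H x) ∂ρ ≤ ∫ x, (f x + cR) ∂ρ :=
      integral_mono_ae hlogH_ρ (hfint_ρ.add (integrable_const _))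
        (hρfacts.mono fun x h => h.1)
    have h3 : ∫ x, (f x + cR) ∂ρ = (∫ x, f x ∂ρ) + cR := by
      rw [integral_add hfint_ρ (integrable_const _)]
      simp
    linarith [hfρval]
  -- combine
  have hlogH_ξ : Integrable (fun x => Real.log (H x)) ξ := by
    rw [hξdef, integrable_add_measure]
    exact ⟨(integrable_smul_measure he10 he1top).2 hlogH_ζ,
      (integrable_smul_measure he20 he2top).2 hlogH_ρ⟩
  have hIξ : ∫ x, Real.log (H x) ∂ξ
      = (1-ε) * ∫ x, Real.log (H x) ∂ζ + ε * ∫ x, Real.log (H x) ∂ρ := by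
    rw [hξdef, integral_add_measure (hlogH_ζ.smul_measure he1top) (hlogH_ρ.smul_measure he2top),
      integral_smul_measure, integral_smul_measure, he1R, he2R, smul_eq_mul, smul_eq_mul]
  have hKξ : KL ξ ν = ENNReal.ofReal (∫ x, Real.log (H x) ∂ξ) := by
    unfold KL
    rw [if_pos ⟨hξν, hlogH_ξ⟩]
  have hKζval : KL ζ ν = ENNReal.ofReal (∫ x, Real.log (f x) ∂ζ) := by
    unfold KL
    rw [if_pos ⟨hζν, hint⟩]
  set K : ℝ := ∫ x, Real.log (f x) ∂ζ with hKdef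
  have hreal : ∫ x, Real.log (H x) ∂ξ ≤ max K 0 + ε * (3 * cR) := by
    rw [hIξ]
    have hIζ' : ∫ x, Real.log (H x) ∂ζ ≤ K + ε * cR := hIζbound
    have h1 : (1-ε) * ∫ x, Real.log (H x) ∂ζ ≤ (1-ε) * (K + ε * cR) := by
      have h1ε : (0:ℝ) ≤ 1 - ε := by linarith
      exact mul_le_mul_of_nonneg_left hIζ' h1ε
    have h2 : (1-ε) * (K + ε * cR) ≤ max K 0 + ε * cR := by
      rcases le_total K 0 with h | h
      · have hK0 : max K 0 = 0 := max_eq_right h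
        rw [hK0]
        nlinarith [mul_nonneg (mul_nonneg hε0.le hε0.le) hcR0.le,
          mul_nonpos_of_nonneg_of_nonpos (show (0:ℝ) ≤ 1-ε by linarith) h]
      · have hK0 : max K 0 = K := max_eq_left h
        rw [hK0]
        nlinarith [mul_nonneg hε0.le h,
          mul_nonneg (mul_nonneg hε0.le hε0.le) hcR0.le]
    have h3 : ε * ∫ x, Real.log (H x) ∂ρ ≤ ε * (2 * cR) :=
      mul_le_mul_of_nonneg_left hIρbound hε0.le
    nlinarith
  refine ⟨ξ, hξPcc, hmean, ?_⟩
  rw [hKξ, hKζval]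
  calc ENNReal.ofReal (∫ x, Real.log (H x) ∂ξ)
      ≤ ENNReal.ofReal (max K 0 + ε * (3 * cR)) := ENNReal.ofReal_le_ofReal hreal
    _ ≤ ENNReal.ofReal (max K 0) + ENNReal.ofReal (ε * (3 * cR)) := ENNReal.ofReal_add_le
    _ = ENNReal.ofReal K + ENNReal.ofReal (ε * (3 * cR)) := by
        congr 1
        rcases le_total K 0 with h | h
        · rw [max_eq_right h, ENNReal.ofReal_zero, ENNReal.ofReal_of_nonpos h]
        · rw [max_eq_left h]

lemma Linflt_anti (ν : Measure ℝ) : Antitone (fun x => Linflt Pcc x ν) := by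
  intro a b hab
  exact biInf_mono fun ζ hζ => ⟨hζ.1, lt_of_lt_of_le hζ.2 hab⟩

lemma biInf_le_biInf_add {α : Type*} (F : α → ℝ≥0∞) (s₁ s₂ : Set α) (d : ℝ≥0∞)
    (h : ∀ ζ ∈ s₂, ∃ ξ ∈ s₁, F ξ ≤ F ζ + d) :
    (⨅ x ∈ s₁, F x) ≤ (⨅ x ∈ s₂, F x) + d := by
  refine ENNReal.le_of_forall_pos_le_add fun δ hδ hlt => ?_
  have hne : (⨅ x ∈ s₂, F x) + d ≠ ⊤ := hlt.ne
  have hinf : (⨅ x ∈ s₂, F x) < (⨅ x ∈ s₂, F x) + δ := by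
    refine ENNReal.lt_add_right (fun htop => hne ?_) (by exact_mod_cast hδ.ne')
    rw [htop]; simp
  obtain ⟨ζ, hζlt⟩ := iInf_lt_iff.1 hinf
  by_cases hζs : ζ ∈ s₂
  · simp only [hζs, iInf_pos] at hζlt
    obtain ⟨ξ, hξ, hFξ⟩ := h ζ hζs
    calc (⨅ x ∈ s₁, F x) ≤ F ξ := biInf_le F hξ
    _ ≤ F ζ + d := hFξ
    _ ≤ ((⨅ x ∈ s₂, F x) + δ) + d := add_le_add_left hζlt.le d
    _ = ((⨅ x ∈ s₂, F x) + d) + δ := by ring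
  · exfalso
    have htop : (⨅ (_ : ζ ∈ s₂), F ζ) = ⊤ := by simp [hζs]
    rw [htop] at hζlt
    exact not_top_lt hζlt

lemma step_lemma (ν : Measure ℝ) {t C : ℝ}
    (hmix : ∀ ζ ∈ Pcc, ∀ ε : ℝ, 0 < ε → ε < 1 →
      ∃ ξ ∈ Pcc, Emean ξ ≤ (1 - ε) * Emean ζ + ε * t ∧
        KL ξ ν ≤ KL ζ ν + ENNReal.ofReal (ε * C))
    {a b : ℝ} (hta : t < a) (hab : a < b) :
    Linflt Pcc a ν ≤ Linflt Pcc b ν + ENNReal.ofReal ((b-a)/(b-t) * C) := by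
  refine biInf_le_biInf_add _ _ _ _ fun ζ hζmem => ?_
  have hε0 : 0 < (b-a)/(b-t) := div_pos (by linarith) (by linarith)
  have hε1 : (b-a)/(b-t) < 1 := (div_lt_one (by linarith)).2 (by linarith)
  obtain ⟨ξ, hξPcc, hEξ, hKLξ⟩ := hmix ζ hζmem.1 _ hε0 hε1
  refine ⟨ξ, ⟨hξPcc, ?_⟩, hKLξ⟩
  have hbt : b - t ≠ 0 := (show (0:ℝ) < b-t by linarith).ne'
  have h2 : (1-(b-a)/(b-t))*b + ((b-a)/(b-t))*t = a := by
    field_simp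
    ring
  calc Emean ξ ≤ (1-(b-a)/(b-t)) * Emean ζ + ((b-a)/(b-t))*t := hEξ
  _ < (1-(b-a)/(b-t))*b + ((b-a)/(b-t))*t := by
      have := mul_lt_mul_of_pos_left hζmem.2 (show (0:ℝ) < 1-(b-a)/(b-t) by linarith)
      linarith
  _ = a := h2

lemma continuousAt_of_two_sided (F : ℝ → ℝ≥0∞) (x K r : ℝ) (hK : 0 ≤ K) (hr : 0 < r)
    (hF : F x ≠ ⊤)
    (h : ∀ y, |y - x| < r →
      F y ≤ F x + ENNReal.ofReal (K * |y - x|) ∧ F x ≤ F y + ENNReal.ofReal (K * |y - x|)) :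
    ContinuousAt F x := by
  rw [ContinuousAt, ENNReal.tendsto_nhds hF]
  intro δ hδ
  set δ' : ℝ≥0∞ := min δ 1 with hδ'def
  have hδ'0 : 0 < δ' := lt_min hδ zero_lt_one
  have hδ't : δ' ≠ ⊤ := ne_top_of_le_ne_top ENNReal.one_ne_top (min_le_right _ _)
  set η := min r (δ'.toReal / (K+1)) with hηdef
  have hη0 : 0 < η :=
    lt_min hr (div_pos (ENNReal.toReal_pos hδ'0.ne' hδ't) (by linarith))
  have hev : ∀ᶠ y in nhds x, |y - x| < η := by
    filter_upwards [Metric.ball_mem_nhds x hη0] with y hy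
    simpa [Real.dist_eq] using hy
  filter_upwards [hev] with y hy
  have h1 := h y (hy.trans_le (min_le_left _ _))
  have hbound : ENNReal.ofReal (K * |y-x|) ≤ δ := by
    have hd0 : 0 ≤ δ'.toReal := ENNReal.toReal_nonneg
    have hstep : K * |y-x| ≤ δ'.toReal := by
      have h2 : |y - x| ≤ δ'.toReal / (K+1) := (hy.trans_le (min_le_right _ _)).le
      have h3 : K * |y-x| ≤ K * (δ'.toReal/(K+1)) := mul_le_mul_of_nonneg_left h2 hK
      have h4 : K * (δ'.toReal/(K+1)) ≤ δ'.toReal := by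
        rw [mul_comm, div_mul_eq_mul_div, div_le_iff₀ (by linarith)]
        nlinarith
      linarith
    calc ENNReal.ofReal (K * |y-x|) ≤ ENNReal.ofReal δ'.toReal :=
      ENNReal.ofReal_le_ofReal hstep
    _ = δ' := ENNReal.ofReal_toReal hδ't
    _ ≤ δ := min_le_left _ _
  constructor
  · rw [tsub_le_iff_right]
    exact h1.2.trans (add_le_add_right hbound _)
  · exact h1.1.trans (add_le_add_right hbound _)

/-- For the model `P[0,1]` and `ν ∈ P[0,1]` with `m(ν)` the minimum of its closed support:
`x ↦ Linf<(x,ν)` is finite and continuous on `(m(ν), +∞)`, and `Linf<(μ,ν) = Linf≤(μ,ν)`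
for every `μ ≠ m(ν)`. -/
theorem Linflt_continuous_and_eq_Linfle (ν : Measure ℝ) (hν : ν ∈ Pcc) :
    (∀ x ∈ Set.Ioi (mMin ν), Linflt Pcc x ν ≠ ⊤) ∧
    ContinuousOn (fun x => Linflt Pcc x ν) (Set.Ioi (mMin ν)) ∧
    (∀ μ : ℝ, μ ≠ mMin ν → Linflt Pcc μ ν = Linfle Pcc μ ν) := by
  have hfin : ∀ x ∈ Set.Ioi (mMin ν), Linflt Pcc x ν ≠ ⊤ := by
    intro x hx
    rw [mem_Ioi] at hx
    obtain ⟨C, hC0, ⟨ρ, hρPcc, hEρ, hKLρ⟩, -⟩ :=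
      main_construction ν hν (show mMin ν < (mMin ν + x)/2 by linarith)
    have hle : Linflt Pcc x ν ≤ KL ρ ν :=
      biInf_le _ ⟨hρPcc, lt_of_le_of_lt hEρ (by linarith)⟩
    exact fun htop => hKLρ (top_le_iff.1 (htop ▸ hle))
  refine ⟨hfin, ?_, ?_⟩
  · intro x hx
    rw [mem_Ioi] at hx
    set m := mMin ν with hm
    set t := (m + x)/2 with ht
    have htm : m < t := by rw [ht]; linarith
    have htx : t < x := by rw [ht]; linarith
    set r := (x - t)/2 with hr
    have hr0 : 0 < r := by rw [hr]; linarith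
    obtain ⟨C, hC0, -, hmix⟩ := main_construction ν hν htm
    set K := C / r with hK
    have hK0 : 0 ≤ K := div_nonneg hC0 hr0.le
    refine ContinuousAt.continuousWithinAt ?_
    refine continuousAt_of_two_sided _ x K r hK0 hr0 (hfin x hx) fun y hy => ?_
    have hty : t < y := by
      have h5 := (abs_lt.1 hy).1
      linarith
    rcases lt_trichotomy y x with hlt | heq | hgt
    · -- y < x
      have hstep := step_lemma ν hmix hty hlt
      have habs : |y - x| = x - y := by rw [abs_of_nonpos (by linarith)]; ring
      constructor
      · refine hstep.trans ?_
        refine add_le_add_right (ENNReal.ofReal_le_ofReal ?_) _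
        rw [habs]
        have hxt : r ≤ x - t := by linarith
        have h1 : (x-y)/(x-t) ≤ (x-y)/r :=
          div_le_div_of_nonneg_left (by linarith) hr0 hxt  -- check signature
        calc (x-y)/(x-t)*C ≤ (x-y)/r*C := mul_le_mul_of_nonneg_right h1 hC0
        _ = K*(x-y) := by rw [hK]; ring
      · exact le_add_right (Linflt_anti ν hlt.le)
    · subst heq
      simp
    · -- x < y
      have hstep := step_lemma ν hmix htx hgt
      have habs : |y - x| = y - x := abs_of_nonneg (by linarith)
      constructor
      · exact le_add_right (Linflt_anti ν hgt.le)
      · refine hstep.trans ?_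
        refine add_le_add_right (ENNReal.ofReal_le_ofReal ?_) _
        rw [habs]
        have hyt : r ≤ y - t := by
          have h5 := (abs_lt.1 hy).1
          linarith
        have h1 : (y-x)/(y-t) ≤ (y-x)/r :=
          div_le_div_of_nonneg_left (by linarith) hr0 hyt
        calc (y-x)/(y-t)*C ≤ (y-x)/r*C := mul_le_mul_of_nonneg_right h1 hC0
        _ = K*(y-x) := by rw [hK]; ring
  · intro μ hμ
    rcases lt_or_gt_of_ne hμ with hlt | hgt
    · -- μ < mMin ν : both sides ⊤
      have hne : ∀ ζ, ζ ∈ Pcc → Emean ζ ≤ μ → KL ζ ν = ⊤ := by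
        intro ζ hζ hE
        by_cases hac : ζ ≪ ν
        · exact absurd (Emean_ge_mMin hν hζ hac) (by linarith)
        · unfold KL
          rw [if_neg (fun hc => hac hc.1)]
      have h1 : Linflt Pcc μ ν = ⊤ := by
        rw [Linflt, iInf_eq_top]
        intro ζ
        rw [iInf_eq_top]
        intro hζS
        exact hne ζ hζS.1 hζS.2.le
      have h2 : Linfle Pcc μ ν = ⊤ := by
        rw [Linfle, iInf_eq_top]
        intro ζ
        rw [iInf_eq_top]
        intro hζS
        exact hne ζ hζS.1 hζS.2
      rw [h1, h2]
    · -- μ > mMin ν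
      set t := (mMin ν + μ)/2 with ht
      have htm : mMin ν < t := by rw [ht]; linarith
      have htμ : t < μ := by rw [ht]; linarith
      obtain ⟨C, hC0, -, hmix⟩ := main_construction ν hν htm
      apply le_antisymm
      · refine ENNReal.le_of_forall_pos_le_add fun ε' hε' _ => ?_
        set e : ℝ := min (1/2) ((ε' : ℝ) / (C+1)) with he
        have hepos : 0 < e := lt_min one_half_pos (div_pos (by exact_mod_cast hε') (by linarith))
        have he1 : e < 1 := lt_of_le_of_lt (min_le_left _ _) (by norm_num)
        have hbd : ENNReal.ofReal (e * C) ≤ (ε' : ℝ≥0∞) := by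
          have h1 : e * C ≤ (ε' : ℝ) := by
            have h2 : e ≤ (ε' : ℝ)/(C+1) := min_le_right _ _
            have h3 : e * C ≤ ((ε':ℝ)/(C+1)) * C := mul_le_mul_of_nonneg_right h2 hC0
            have h4 : ((ε':ℝ)/(C+1)) * C ≤ (ε':ℝ) := by
              rw [div_mul_eq_mul_div, div_le_iff₀ (by linarith)]
              nlinarith [ε'.coe_nonneg]
            linarith
          calc ENNReal.ofReal (e * C) ≤ ENNReal.ofReal (ε' : ℝ) := ENNReal.ofReal_le_ofReal h1
          _ = (ε' : ℝ≥0∞) := ENNReal.ofReal_coe_nnreal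
        have hmain : Linflt Pcc μ ν ≤ Linfle Pcc μ ν + ENNReal.ofReal (e * C) := by
          refine biInf_le_biInf_add _ _ _ _ fun ζ hζmem => ?_
          obtain ⟨ξ, hξPcc, hEξ, hKLξ⟩ := hmix ζ hζmem.1 e hepos he1
          refine ⟨ξ, ⟨hξPcc, ?_⟩, hKLξ⟩
          have h5 : (1-e) * Emean ζ ≤ (1-e) * μ :=
            mul_le_mul_of_nonneg_left hζmem.2 (by linarith)
          have h6 : (1-e)*μ + e*t < μ := by nlinarith
          calc Emean ξ ≤ (1-e) * Emean ζ + e * t := hEξ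
          _ ≤ (1-e)*μ + e*t := by linarith
          _ < μ := h6
        exact hmain.trans (add_le_add_right hbd _)
      · exact biInf_mono fun ζ hζ => ⟨hζ.1, hζ.2.le⟩
end
end
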